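/- arXiv:1901.00819 — 6 statements merged into one kernel-verified Lean document; each statement's English description precedes it below -/
import Mathlib

section
/- For every integer n ≥ 2, every scale s > 0, all points x₁, …, xₙ ∈ ℝ² and all charges σ₁, …, σₙ ∈ {−1, 1}, the total interaction energy satisfies ∑_{1 ≤ i < j ≤ n} σᵢ σⱼ h(|xᵢ − xⱼ|/s) ≥ −(1/2)·(n − |∑_{j=1}^{n} σⱼ|). -/
open Real MeasureTheory Set intervalIntegral

/-- The two-dimensional Euclid's hat function:
`h w = (2/π)(arccos w − w√(1−w²))` for `0 ≤ w ≤ 1` and `h w = 0` for `w > 1`. -/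
noncomputable def euclidHat (w : ℝ) : ℝ :=
  if w ≤ 1 then (2 / π) * (Real.arccos w - w * Real.sqrt (1 - w ^ 2)) else 0

lemma integral_sqrt_one_sub_sq' (w : ℝ) (hw0 : -1 ≤ w) (hw1 : w ≤ 1) :
    ∫ u in w..1, Real.sqrt (1 - u^2) = (Real.arccos w - w * Real.sqrt (1 - w^2)) / 2 := by
  have key : (∫ x in (0:ℝ)..Real.arccos w, (-Real.sin x) • ((fun u => Real.sqrt (1 - u^2)) ∘ Real.cos) x)
      = ∫ u in (Real.cos 0)..(Real.cos (Real.arccos w)), Real.sqrt (1 - u^2) :=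
    integral_comp_smul_deriv (fun x _ => Real.hasDerivAt_cos x) (by fun_prop) (by fun_prop)
  rw [Real.cos_zero, Real.cos_arccos hw0 hw1] at key
  have congrkey : (∫ x in (0:ℝ)..Real.arccos w, (-Real.sin x) • ((fun u => Real.sqrt (1 - u^2)) ∘ Real.cos) x)
      = ∫ x in (0:ℝ)..Real.arccos w, -(Real.sin x ^ 2) := by
    apply intervalIntegral.integral_congr
    intro θ hθ
    have h1 : 0 ≤ θ ∧ θ ≤ π := by
      rw [Set.uIcc_of_le (Real.arccos_nonneg w)] at hθ
      exact ⟨hθ.1, le_trans hθ.2 (Real.arccos_le_pi w)⟩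
    have hsin : 0 ≤ Real.sin θ := Real.sin_nonneg_of_nonneg_of_le_pi h1.1 h1.2
    have hs : Real.sqrt (1 - Real.cos θ ^ 2) = Real.sin θ := by
      rw [show 1 - Real.cos θ ^ 2 = Real.sin θ ^ 2 by rw [Real.sin_sq]]
      exact Real.sqrt_sq hsin
    simp only [Function.comp, smul_eq_mul, hs]
    ring
  rw [congrkey, intervalIntegral.integral_neg, integral_sin_sq] at key
  rw [intervalIntegral.integral_symm, ← key]
  rw [Real.sin_arccos, Real.cos_arccos hw0 hw1, Real.sin_zero, Real.cos_zero]
  ring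

lemma lens_integral (r d : ℝ) (hr : 0 < r) (hd : 0 ≤ d) (hdr : d ≤ 2*r) :
    ∫ a : ℝ, 2 * Real.sqrt (r^2 - (|a| + d/2)^2) = π * r^2 * euclidHat (d/(2*r)) := by
  set w : ℝ := d / (2*r) with hwdef
  have hw0 : 0 ≤ w := by positivity
  have hw1 : w ≤ 1 := by rw [hwdef, div_le_one (by linarith)]; linarith
  set g : ℝ → ℝ := fun a => 2 * Real.sqrt (r^2 - (|a| + d/2)^2) with hg
  set F : ℝ → ℝ := fun t => 2 * Real.sqrt (r^2 - t^2) with hF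
  have hcontg : Continuous g := by
    apply Continuous.mul continuous_const
    exact Real.continuous_sqrt.comp (by fun_prop)
  have hcontF : Continuous F := by
    apply Continuous.mul continuous_const
    exact Real.continuous_sqrt.comp (by fun_prop)
  have hsupp : Function.support g ⊆ Set.Ioc (-r) r := by
    intro a ha
    simp only [Function.mem_support, hg] at ha
    have h1 : 0 < r^2 - (|a| + d/2)^2 := by
      by_contra h
      push_neg at h
      exact ha (by rw [Real.sqrt_eq_zero'.mpr (by linarith)]; ring)
    have h2 : |a| < r := by nlinarith [abs_nonneg a]
    exact ⟨(abs_lt.mp h2).1, le_of_lt (abs_lt.mp h2).2⟩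
  have step1 : ∫ a : ℝ, g a = ∫ a in (-r)..r, g a :=
    (intervalIntegral.integral_eq_integral_of_support_subset hsupp).symm
  have step2 : ∫ a in (-r)..(0:ℝ), g a = ∫ a in (0:ℝ)..r, g a := by
    have h := intervalIntegral.integral_comp_neg (a := (0:ℝ)) (b := r) g
    simp only [neg_zero] at h
    rw [← h]
    apply intervalIntegral.integral_congr
    intro a _
    simp [hg, abs_neg]
  have step3 : ∫ a in (-r)..r, g a = 2 * ∫ a in (0:ℝ)..r, g a := by
    rw [← intervalIntegral.integral_add_adjacent_intervals
      (hcontg.intervalIntegrable (-r) 0) (hcontg.intervalIntegrable 0 r), step2]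
    ring
  have step4 : ∫ a in (0:ℝ)..r, g a = ∫ a in (0:ℝ)..r, F (a + d/2) := by
    apply intervalIntegral.integral_congr
    intro a ha
    rw [Set.uIcc_of_le hr.le] at ha
    simp [hg, hF, abs_of_nonneg ha.1]
  have step5 : ∫ a in (0:ℝ)..r, F (a + d/2) = ∫ t in (d/2)..(r + d/2), F t := by
    rw [intervalIntegral.integral_comp_add_right F (d/2)]
    norm_num
  have step6 : ∫ t in (r)..(r + d/2), F t = 0 := by
    rw [show (0:ℝ) = ∫ t in (r)..(r + d/2), (0:ℝ) by simp]
    apply intervalIntegral.integral_congr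
    intro t ht
    rw [Set.uIcc_of_le (by linarith)] at ht
    simp only [hF]
    rw [Real.sqrt_eq_zero'.mpr (by nlinarith [ht.1, ht.2])]
    ring
  have step7 : ∫ t in (d/2)..(r + d/2), F t = ∫ t in (d/2)..r, F t := by
    rw [← intervalIntegral.integral_add_adjacent_intervals
      (hcontF.intervalIntegrable (d/2) r) (hcontF.intervalIntegrable r (r + d/2)), step6]
    ring
  have step8 : ∫ t in (d/2)..r, F t = r * ∫ u in w..(1:ℝ), F (r * u) := by
    rw [intervalIntegral.integral_comp_mul_left F (ne_of_gt hr)]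
    have h1 : r * w = d / 2 := by rw [hwdef]; field_simp
    have h2 : r * 1 = r := mul_one r
    rw [h1, h2, smul_eq_mul, ← mul_assoc, mul_inv_cancel₀ (ne_of_gt hr), one_mul]
  have step9 : ∫ u in w..(1:ℝ), F (r * u) = (2*r) * ∫ u in w..(1:ℝ), Real.sqrt (1 - u^2) := by
    rw [← intervalIntegral.integral_const_mul]
    apply intervalIntegral.integral_congr
    intro u _
    simp only [hF]
    rw [show r^2 - (r*u)^2 = r^2 * (1 - u^2) by ring, Real.sqrt_mul (sq_nonneg r),
      Real.sqrt_sq hr.le]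
    ring
  rw [step1, step3, step4, step5, step7, step8, step9,
    integral_sqrt_one_sub_sq' w (by linarith) hw1]
  rw [show euclidHat w = (2 / π) * (Real.arccos w - w * Real.sqrt (1 - w ^ 2)) from if_pos hw1]
  have hπ : (π:ℝ) ≠ 0 := Real.pi_ne_zero
  field_simp

lemma lens_prod (r d : ℝ) (hr : 0 < r) (hd : 0 ≤ d) (hdr : d ≤ 2*r) :
    volume {p : ℝ × ℝ | (p.1 + d/2)^2 + p.2^2 ≤ r^2 ∧ (p.1 - d/2)^2 + p.2^2 ≤ r^2}
      = ENNReal.ofReal (π * r^2 * euclidHat (d/(2*r))) := by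
  set g : ℝ → ℝ := fun a => 2 * Real.sqrt (r^2 - (|a| + d/2)^2) with hg
  set S : Set (ℝ × ℝ) :=
    {p : ℝ × ℝ | (p.1 + d/2)^2 + p.2^2 ≤ r^2 ∧ (p.1 - d/2)^2 + p.2^2 ≤ r^2} with hS
  have hgval : ∀ a, g a = 2 * Real.sqrt (r^2 - (|a| + d/2)^2) := fun a => rfl
  have hSmeas : MeasurableSet S := by
    rw [hS, Set.setOf_and]
    apply MeasurableSet.inter
    · exact (isClosed_le (((continuous_fst.add continuous_const).pow 2).add
        (continuous_snd.pow 2)) continuous_const).measurableSet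
    · exact (isClosed_le (((continuous_fst.sub continuous_const).pow 2).add
        (continuous_snd.pow 2)) continuous_const).measurableSet
  have hslice : ∀ a : ℝ, volume (Prod.mk a ⁻¹' S) = ENNReal.ofReal (g a) := by
    intro a
    have hset : Prod.mk a ⁻¹' S = {b : ℝ | b^2 ≤ r^2 - (|a| + d/2)^2} := by
      ext b
      simp only [hS, Set.mem_preimage, Set.mem_setOf_eq]
      rcases abs_cases a with ⟨h1, h2⟩ | ⟨h1, h2⟩
      · constructor
        · intro h; nlinarith [h.1, h.2]
        · intro h; constructor <;> nlinarith
      · constructor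
        · intro h; nlinarith [h.1, h.2]
        · intro h; constructor <;> nlinarith
    rw [hset]
    set k : ℝ := r^2 - (|a| + d/2)^2 with hk
    rcases lt_or_ge k 0 with hk0 | hk0
    · have hempty : {b : ℝ | b^2 ≤ k} = ∅ := by
        ext b; simp only [Set.mem_setOf_eq, Set.mem_empty_iff_false, iff_false]
        nlinarith [sq_nonneg b]
      rw [hempty, measure_empty, hgval a, Real.sqrt_eq_zero'.mpr (le_of_lt hk0)]
      simp
    · have hIcc : {b : ℝ | b^2 ≤ k} = Set.Icc (-Real.sqrt k) (Real.sqrt k) := by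
        ext b
        simp only [Set.mem_setOf_eq, Set.mem_Icc, ← abs_le]
        constructor
        · exact fun h => Real.abs_le_sqrt h
        · intro h
          calc b^2 = |b|^2 := (sq_abs b).symm
          _ ≤ (Real.sqrt k)^2 := by
              apply pow_le_pow_left₀ (abs_nonneg b) h
          _ = k := Real.sq_sqrt hk0
      rw [hIcc, Real.volume_Icc, hgval a]
      congr 1
      rw [← hk]
      ring
  have hcontg : Continuous g := by
    apply Continuous.mul continuous_const
    exact Real.continuous_sqrt.comp (by fun_prop)
  have hsupp : ∀ a ∉ Set.Icc (-r) r, g a = 0 := by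
    intro a ha
    simp only [Set.mem_Icc, not_and_or, not_le] at ha
    have h2 : r ≤ |a| := by rcases ha with h | h; · rw [abs_of_nonpos (by linarith)]; linarith
                            · rw [abs_of_pos (by linarith)]; linarith
    rw [hgval a, Real.sqrt_eq_zero'.mpr (by nlinarith [abs_nonneg a] : r^2 - (|a| + d/2)^2 ≤ 0)]
    ring
  have hcs : HasCompactSupport g := HasCompactSupport.intro isCompact_Icc hsupp
  have hint : Integrable g := hcontg.integrable_of_hasCompactSupport hcs
  have hnn : 0 ≤ g := by intro a; rw [hgval a]; positivity
  rw [MeasureTheory.Measure.volume_eq_prod, MeasureTheory.Measure.prod_apply hSmeas]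
  simp_rw [hslice]
  rw [← MeasureTheory.ofReal_integral_eq_lintegral_ofReal hint (Filter.Eventually.of_forall hnn)]
  rw [lens_integral r d hr hd hdr]

lemma lens_complex (r : ℝ) (hr : 0 < r) (z w : ℂ) :
    volume (Metric.closedBall z r ∩ Metric.closedBall w r)
      = ENNReal.ofReal (π * r^2 * euclidHat (dist z w / (2*r))) := by
  set d : ℝ := dist z w with hd
  have hd0 : 0 ≤ d := dist_nonneg
  rcases lt_or_ge (2*r) d with hbig | hdr
  · -- disjoint case
    have hempty : Metric.closedBall z r ∩ Metric.closedBall w r = ∅ := by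
      ext u
      simp only [Set.mem_inter_iff, Metric.mem_closedBall, Set.mem_empty_iff_false, iff_false,
        not_and_or, not_le]
      by_contra h
      push_neg at h
      have : d ≤ 2 * r := by
        calc d = dist z w := hd
        _ ≤ dist z u + dist u w := dist_triangle z u w
        _ ≤ r + r := add_le_add (by rw [dist_comm]; exact h.1) h.2
        _ = 2 * r := by ring
      linarith
    have hhat : euclidHat (d / (2*r)) = 0 := by
      rw [euclidHat, if_neg]
      rw [not_le, lt_div_iff₀ (by linarith)]
      linarith
    rw [hempty, hhat, measure_empty, mul_zero, ENNReal.ofReal_zero]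
  · -- main case
    obtain ⟨c, hc1, hc2⟩ : ∃ c : ℂ, ‖c‖ = 1 ∧ c * (d:ℂ) = w - z := by
      rcases eq_or_ne z w with rfl | hzw
      · exact ⟨1, by simp, by simp [hd]⟩
      · refine ⟨(w - z) / (d:ℂ), ?_, ?_⟩
        · rw [norm_div, Complex.norm_real, Real.norm_of_nonneg hd0]
          rw [hd, dist_comm, Complex.dist_eq]
          exact div_self (by
            simp only [ne_eq, norm_eq_zero, sub_eq_zero]
            exact fun h => hzw h.symm)
        · have hdne : (d:ℂ) ≠ 0 := by
            simp only [ne_eq, Complex.ofReal_eq_zero]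
            rw [hd]
            exact dist_ne_zero.mpr hzw
          field_simp
    set m : ℂ := (z + w)/2 with hm
    set φ : ℂ → ℂ := fun u => c * u + m with hφ
    have hmp : MeasurePreserving φ volume volume := by
      have h1 : MeasurePreserving (fun u : ℂ => c * u) volume volume := by
        have hcirc : c ∈ Metric.sphere (0:ℂ) 1 := by
          simp [mem_sphere_zero_iff_norm, hc1]
        exact (rotation ⟨c, hcirc⟩).measurePreserving
      exact (measurePreserving_add_right volume m).comp h1
    have hiso : ∀ u v : ℂ, dist (φ u) (φ v) = dist u v := by
      intro u v
      simp only [hφ, Complex.dist_eq]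
      rw [show c * u + m - (c * v + m) = c * (u - v) by ring, norm_mul, hc1, one_mul]
    have himg1 : φ ((-(d/2) : ℝ) : ℂ) = z := by
      simp only [hφ, hm]
      push_cast
      rw [show c * -((d:ℂ)/2) = -(c * (d:ℂ))/2 by ring, hc2]
      ring
    have himg2 : φ (((d/2) : ℝ) : ℂ) = w := by
      simp only [hφ, hm]
      push_cast
      rw [show c * ((d:ℂ)/2) = (c * (d:ℂ))/2 by ring, hc2]
      ring
    have hpre1 : φ ⁻¹' (Metric.closedBall z r) = Metric.closedBall ((-(d/2) : ℝ) : ℂ) r := by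
      ext u
      simp only [Set.mem_preimage, Metric.mem_closedBall]
      rw [← himg1, hiso]
    have hpre2 : φ ⁻¹' (Metric.closedBall w r) = Metric.closedBall (((d/2) : ℝ) : ℂ) r := by
      ext u
      simp only [Set.mem_preimage, Metric.mem_closedBall]
      rw [← himg2, hiso]
    set S : Set (ℝ × ℝ) :=
      {p : ℝ × ℝ | (p.1 + d/2)^2 + p.2^2 ≤ r^2 ∧ (p.1 - d/2)^2 + p.2^2 ≤ r^2} with hS
    have hSmeas : MeasurableSet S := by
      rw [hS, Set.setOf_and]
      apply MeasurableSet.inter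
      · exact (isClosed_le (((continuous_fst.add continuous_const).pow 2).add
          (continuous_snd.pow 2)) continuous_const).measurableSet
      · exact (isClosed_le (((continuous_fst.sub continuous_const).pow 2).add
          (continuous_snd.pow 2)) continuous_const).measurableSet
    have hpre3 : Metric.closedBall ((-(d/2) : ℝ) : ℂ) r ∩ Metric.closedBall (((d/2) : ℝ) : ℂ) r
        = Complex.measurableEquivRealProd ⁻¹' S := by
      ext u
      simp only [Set.mem_inter_iff, Metric.mem_closedBall, Set.mem_preimage,
        Complex.measurableEquivRealProd_apply, hS, Set.mem_setOf_eq]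
      rw [Complex.dist_eq_re_im, Complex.dist_eq_re_im]
      simp only [Complex.ofReal_re, Complex.ofReal_im]
      rw [Real.sqrt_le_iff, Real.sqrt_le_iff]
      constructor
      · intro h
        constructor
        · calc (u.re + d/2)^2 + u.im^2 = (u.re - (-(d/2)))^2 + (u.im - 0)^2 := by ring
          _ ≤ r^2 := h.1.2
        · calc (u.re - d/2)^2 + u.im^2 = (u.re - d/2)^2 + (u.im - 0)^2 := by ring
          _ ≤ r^2 := h.2.2
      · intro h
        refine ⟨⟨hr.le, ?_⟩, ⟨hr.le, ?_⟩⟩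
        · calc (u.re - (-(d/2)))^2 + (u.im - 0)^2 = (u.re + d/2)^2 + u.im^2 := by ring
          _ ≤ r^2 := h.1
        · calc (u.re - d/2)^2 + (u.im - 0)^2 = (u.re - d/2)^2 + u.im^2 := by ring
          _ ≤ r^2 := h.2
    have hmeasC : MeasurableSet (Metric.closedBall z r ∩ Metric.closedBall w r) :=
      (Metric.isClosed_closedBall.measurableSet).inter (Metric.isClosed_closedBall.measurableSet)
    calc volume (Metric.closedBall z r ∩ Metric.closedBall w r)
        = volume (φ ⁻¹' (Metric.closedBall z r ∩ Metric.closedBall w r)) :=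
          (hmp.measure_preimage hmeasC.nullMeasurableSet).symm
      _ = volume (Complex.measurableEquivRealProd ⁻¹' S) := by
          rw [Set.preimage_inter, hpre1, hpre2, hpre3]
      _ = volume S := Complex.volume_preserving_equiv_real_prod.measure_preimage
          hSmeas.nullMeasurableSet
      _ = ENNReal.ofReal (π * r^2 * euclidHat (d/(2*r))) := lens_prod r d hr hd0 hdr


lemma euclidHat_nonneg (w : ℝ) (hw : 0 ≤ w) : 0 ≤ euclidHat w := by
  rw [euclidHat]
  split_ifs with h
  · have hint : 0 ≤ ∫ u in w..(1:ℝ), Real.sqrt (1 - u^2) :=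
      intervalIntegral.integral_nonneg h (fun u _ => Real.sqrt_nonneg _)
    rw [integral_sqrt_one_sub_sq' w (by linarith) h] at hint
    have h2 : 0 ≤ 2 / π := by positivity
    nlinarith
  · exact le_refl 0

lemma lens_toReal (r : ℝ) (hr : 0 < r) (z w : ℂ) :
    (volume (Metric.closedBall z r ∩ Metric.closedBall w r)).toReal
      = π * r^2 * euclidHat (dist z w / (2*r)) := by
  rw [lens_complex r hr z w, ENNReal.toReal_ofReal]
  exact mul_nonneg (by positivity) (euclidHat_nonneg _ (by positivity))

lemma euclidHat_zero : euclidHat 0 = 1 := by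
  rw [euclidHat, if_pos (by norm_num)]
  rw [Real.arccos_zero]
  have : Real.sqrt (1 - 0^2) = 1 := by norm_num
  rw [this]
  field_simp
  ring

lemma sum_split {n : ℕ} (a : Fin n → Fin n → ℝ) (hsymm : ∀ i j, a i j = a j i) :
    ∑ i : Fin n, ∑ j : Fin n, a i j
      = (∑ i : Fin n, a i i)
        + 2 * ∑ i : Fin n, ∑ j ∈ Finset.univ.filter (fun j => i < j), a i j := by
  have h1 : ∀ i : Fin n, ∑ j : Fin n, a i j
      = (∑ j ∈ Finset.univ.filter (fun j => i < j), a i j)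
        + ((∑ j ∈ Finset.univ.filter (fun j => j < i), a i j) + a i i) := by
    intro i
    rw [← Finset.sum_filter_add_sum_filter_not Finset.univ (fun j => i < j) (a i)]
    congr 1
    rw [← Finset.sum_filter_add_sum_filter_not (Finset.univ.filter (fun j => ¬ i < j))
      (fun j => j < i) (a i)]
    congr 1
    · congr 1
      ext j
      simp only [Finset.mem_filter, Finset.mem_univ, true_and]
      constructor
      · exact fun h => h.2
      · exact fun h => ⟨asymm h, h⟩
    · rw [show (Finset.univ.filter (fun j => ¬ i < j)).filter (fun j => ¬ j < i) = {i} by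
        ext j
        simp only [Finset.mem_filter, Finset.mem_univ, true_and, Finset.mem_singleton, not_lt]
        constructor
        · exact fun h => le_antisymm h.1 h.2
        · rintro rfl; exact ⟨le_refl _, le_refl _⟩]
      exact Finset.sum_singleton _ _
  have h2 : ∑ i : Fin n, ∑ j ∈ Finset.univ.filter (fun j => j < i), a i j
      = ∑ i : Fin n, ∑ j ∈ Finset.univ.filter (fun j => i < j), a i j := by
    rw [Finset.sum_comm' (s' := fun j => Finset.univ.filter (fun i => j < i)) (t' := Finset.univ)
      (by intro i j; simp only [Finset.mem_filter, Finset.mem_univ, true_and, and_comm])]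
    apply Finset.sum_congr rfl
    intro j _
    apply Finset.sum_congr rfl
    intro i _
    exact hsymm i j
  simp_rw [h1]
  rw [Finset.sum_add_distrib, Finset.sum_add_distrib, h2]
  ring

lemma int_abs_le_sq (k : ℤ) : |(k:ℝ)| ≤ (k:ℝ)^2 := by
  have h : |k| ≤ k^2 := by
    rcases eq_or_ne k 0 with rfl | h
    · simp
    · have h1 : 1 ≤ |k| := Int.one_le_abs h
      nlinarith [abs_nonneg k, sq_abs k]
  calc |(k:ℝ)| = ((|k| : ℤ) : ℝ) := by push_cast; rfl
  _ ≤ (((k^2 : ℤ)) : ℝ) := by exact_mod_cast h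
  _ = (k:ℝ)^2 := by push_cast; ring

theorem euclidHat_energy_lower_bound
    (n : ℕ) (hn : 2 ≤ n) (s : ℝ) (hs : 0 < s)
    (x : Fin n → EuclideanSpace ℝ (Fin 2))
    (σ : Fin n → ℝ) (hσ : ∀ j, σ j = 1 ∨ σ j = -1) :
    ∑ i : Fin n, ∑ j ∈ Finset.univ.filter (fun j => i < j),
        σ i * σ j * euclidHat (‖x i - x j‖ / s)
      ≥ -(1 / 2) * ((n : ℝ) - |∑ j : Fin n, σ j|) := by
  classical
  set r : ℝ := s / 2 with hrdef
  have hr : 0 < r := by positivity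
  have h2r : 2 * r = s := by rw [hrdef]; ring
  set L := Complex.orthonormalBasisOneI.repr with hL
  set z : Fin n → ℂ := fun j => L.symm (x j) with hz
  have hdist : ∀ i j, dist (z i) (z j) = ‖x i - x j‖ := by
    intro i j
    rw [dist_eq_norm, hz, ← map_sub, L.symm.norm_map]
  set B : Fin n → Set ℂ := fun j => Metric.closedBall (z j) r with hB
  have hBmeas : ∀ j, MeasurableSet (B j) := fun j => Metric.isClosed_closedBall.measurableSet
  have hBBfin : ∀ i j : Fin n, volume (B i ∩ B j) < ⊤ :=
    fun i j => lt_of_le_of_lt (measure_mono Set.inter_subset_left)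
      (measure_closedBall_lt_top)
  set V : ℝ := π * r^2 with hV
  have hVpos : 0 < V := by positivity
  -- the interaction coefficients
  have hlens : ∀ i j : Fin n, (volume (B i ∩ B j)).toReal
      = V * euclidHat (‖x i - x j‖ / s) := by
    intro i j
    rw [hB, lens_toReal r hr (z i) (z j), hdist, h2r, hV]
  have hVol1 : ∀ j, (volume (B j)).toReal = V := by
    intro j
    have := hlens j j
    rw [Set.inter_self] at this
    rw [this, sub_self, norm_zero, zero_div, euclidHat_zero, mul_one]
  -- the charge field
  set f : ℂ → ℝ := fun u => ∑ j : Fin n, (B j).indicator (fun _ => σ j) u with hf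
  have hint_ind : ∀ i j : Fin n, ∀ c : ℝ,
      Integrable ((B i ∩ B j).indicator (fun _ => c)) volume := by
    intro i j c
    rw [integrable_indicator_iff ((hBmeas i).inter (hBmeas j))]
    exact integrableOn_const (hBBfin i j).ne
  have hint_ind1 : ∀ j : Fin n, ∀ c : ℝ, Integrable ((B j).indicator (fun _ => c)) volume := by
    intro j c
    have := hint_ind j j c
    rwa [Set.inter_self] at this
  have hIf : Integrable f volume := by
    rw [hf]
    exact integrable_finset_sum Finset.univ (fun j _ => hint_ind1 j (σ j))
  -- f is integer-valued
  have hfint : ∀ u : ℂ, ∃ k : ℤ, f u = (k : ℝ) := by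
    intro u
    refine ⟨∑ j : Fin n, if u ∈ B j then (if σ j = 1 then 1 else -1) else 0, ?_⟩
    rw [hf]
    push_cast
    apply Finset.sum_congr rfl
    intro j _
    rw [Set.indicator_apply]
    by_cases hu : u ∈ B j
    · rw [if_pos hu, if_pos hu]
      rcases hσ j with h | h
      · rw [if_pos h, h]
      · rw [if_neg (by rw [h]; norm_num), h]
    · rw [if_neg hu, if_neg hu]
  -- pointwise |f| ≤ f^2
  have habs : ∀ u : ℂ, |f u| ≤ f u ^ 2 := by
    intro u
    obtain ⟨k, hk⟩ := hfint u
    rw [hk]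
    exact int_abs_le_sq k
  -- expansion of f^2
  have hsq : ∀ u : ℂ, f u ^ 2
      = ∑ i : Fin n, ∑ j : Fin n, (B i ∩ B j).indicator (fun _ => σ i * σ j) u := by
    intro u
    rw [hf, sq]
    rw [Finset.sum_mul_sum]
    apply Finset.sum_congr rfl
    intro i _
    apply Finset.sum_congr rfl
    intro j _
    exact (Set.inter_indicator_mul (fun _ => σ i) (fun _ => σ j) u).symm
  have hIf2 : Integrable (fun u => f u ^ 2) volume := by
    have : Integrable (fun u => ∑ i : Fin n, ∑ j : Fin n,
        (B i ∩ B j).indicator (fun _ => σ i * σ j) u) volume :=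
      integrable_finset_sum Finset.univ (fun i _ =>
        integrable_finset_sum Finset.univ (fun j _ => hint_ind i j (σ i * σ j)))
    exact this.congr (Filter.Eventually.of_forall (fun u => (hsq u).symm))
  -- the two integrals
  have hintf : ∫ u, f u = V * ∑ j : Fin n, σ j := by
    rw [hf, integral_finset_sum Finset.univ (fun j _ => hint_ind1 j (σ j))]
    rw [Finset.mul_sum]
    apply Finset.sum_congr rfl
    intro j _
    rw [integral_indicator_const (σ j) (hBmeas j), measureReal_def, hVol1 j, smul_eq_mul]
  have hintf2 : ∫ u, f u ^ 2
      = V * ∑ i : Fin n, ∑ j : Fin n, σ i * σ j * euclidHat (‖x i - x j‖ / s) := by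
    simp_rw [hsq]
    rw [integral_finset_sum Finset.univ (fun i _ =>
      integrable_finset_sum Finset.univ (fun j _ => hint_ind i j (σ i * σ j)))]
    rw [Finset.mul_sum]
    apply Finset.sum_congr rfl
    intro i _
    rw [integral_finset_sum Finset.univ (fun j _ => hint_ind i j (σ i * σ j)), Finset.mul_sum]
    apply Finset.sum_congr rfl
    intro j _
    rw [integral_indicator_const (σ i * σ j) ((hBmeas i).inter (hBmeas j)), measureReal_def, hlens i j,
      smul_eq_mul]
    ring
  -- the key inequality
  have hkey : V * |∑ j : Fin n, σ j|
      ≤ V * ∑ i : Fin n, ∑ j : Fin n, σ i * σ j * euclidHat (‖x i - x j‖ / s) := by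
    calc V * |∑ j : Fin n, σ j| = |V * ∑ j : Fin n, σ j| := by
          rw [abs_mul, abs_of_pos hVpos]
      _ = |∫ u, f u| := by rw [hintf]
      _ ≤ ∫ u, |f u| := by
          have := norm_integral_le_integral_norm (μ := volume) f
          simpa using this
      _ ≤ ∫ u, f u ^ 2 := integral_mono hIf.abs hIf2 habs
      _ = _ := hintf2
  have hT : |∑ j : Fin n, σ j|
      ≤ ∑ i : Fin n, ∑ j : Fin n, σ i * σ j * euclidHat (‖x i - x j‖ / s) :=
    le_of_mul_le_mul_left hkey hVpos
  -- split the double sum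
  set a : Fin n → Fin n → ℝ := fun i j => σ i * σ j * euclidHat (‖x i - x j‖ / s) with ha
  have hsymm : ∀ i j, a i j = a j i := by
    intro i j
    rw [ha]
    simp only
    rw [norm_sub_rev]
    ring
  have hdiag : ∑ i : Fin n, a i i = (n : ℝ) := by
    rw [show (n:ℝ) = ∑ _i : Fin n, (1:ℝ) by simp]
    apply Finset.sum_congr rfl
    intro i _
    rw [ha]
    simp only
    rw [sub_self, norm_zero, zero_div, euclidHat_zero, mul_one]
    rcases hσ i with h | h <;> rw [h] <;> norm_num
  have hsplit := sum_split a hsymm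
  rw [hdiag] at hsplit
  rw [hsplit] at hT
  linarith
end

section
/- For every integer n ≥ 1, every s > 0, all points x₁, …, xₙ ∈ ℝ² and all charges σ₁, …, σₙ ∈ {−1, 1}, one has the identity ∑_{1 ≤ i, j ≤ n} σᵢ σⱼ h(|xᵢ − xⱼ|/s) = (4/(π s²)) · ∫_{ℝ²} ( ∑_{j=1}^{n} σⱼ · 𝟙_{B(xⱼ, s/2)}(z) )² dz, where 𝟙_{B(x, r)} denotes the indicator function of the closed Euclidean ball of radius r centered at x in ℝ². -/
set_option maxHeartbeats 1000000

open Real MeasureTheory Set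

lemma ftc_sqrt (r a : ℝ) (hr : 0 < r) (ha : 0 ≤ a) (har : a ≤ r) :
    ∫ t in a..r, Real.sqrt (r^2 - t^2)
      = (r^2 * (π/2) - (a * Real.sqrt (r^2 - a^2) + r^2 * Real.arcsin (a/r)))/2 := by
  set F : ℝ → ℝ := fun t => (t * Real.sqrt (r^2 - t^2) + r^2 * Real.arcsin (t/r))/2 with hF
  have hcont : ContinuousOn F (Icc a r) := by
    apply Continuous.continuousOn
    exact (((continuous_id.mul (Real.continuous_sqrt.comp (by continuity))).add
      (continuous_const.mul (Real.continuous_arcsin.comp (continuous_id.div_const r)))).div_const 2)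
  have hderiv : ∀ t ∈ Ioo a r, HasDerivAt F (Real.sqrt (r^2 - t^2)) t := by
    intro t ht
    have ht0 : 0 ≤ t := le_trans ha ht.1.le
    have htr : t < r := ht.2
    have hpos : 0 < r^2 - t^2 := by nlinarith
    have hs0 : 0 < Real.sqrt (r^2 - t^2) := Real.sqrt_pos.mpr hpos
    have h1 : HasDerivAt (fun t : ℝ => r^2 - t^2) (-(2*t)) t := by
      simpa using ((hasDerivAt_pow 2 t).const_sub (r^2))
    have h2 : HasDerivAt (fun t : ℝ => Real.sqrt (r^2 - t^2))
        (1 / (2 * Real.sqrt (r^2 - t^2)) * -(2*t)) t :=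
      (Real.hasDerivAt_sqrt hpos.ne').comp t h1
    have h3 : HasDerivAt (fun t : ℝ => t * Real.sqrt (r^2 - t^2))
        (1 * Real.sqrt (r^2 - t^2) + t * (1 / (2 * Real.sqrt (r^2 - t^2)) * -(2*t))) t :=
      (hasDerivAt_id t).mul h2
    have harc : HasDerivAt (fun t : ℝ => Real.arcsin (t/r))
        ((1 / Real.sqrt (1 - (t/r)^2)) * (1/r)) t := by
      have h4 : HasDerivAt (fun t : ℝ => t / r) (1/r) t := (hasDerivAt_id t).div_const r
      have h5 : t / r ≠ -1 := by
        have : 0 ≤ t / r := by positivity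
        intro h; rw [h] at this; linarith
      have h6 : t / r ≠ 1 := by
        intro h
        have := (div_eq_one_iff_eq hr.ne').mp h
        linarith
      exact (Real.hasDerivAt_arcsin h5 h6).comp t h4
    have key : HasDerivAt F
        ((1 * Real.sqrt (r^2 - t^2) + t * (1 / (2 * Real.sqrt (r^2 - t^2)) * -(2*t))
          + r^2 * ((1 / Real.sqrt (1 - (t/r)^2)) * (1/r)))/2) t :=
      (h3.add (harc.const_mul (r^2))).div_const 2
    convert key using 1
    have hr2 : Real.sqrt (1 - (t/r)^2) = Real.sqrt (r^2 - t^2) / r := by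
      rw [show (1 : ℝ) - (t/r)^2 = (r^2 - t^2)/r^2 by field_simp,
        Real.sqrt_div hpos.le, Real.sqrt_sq hr.le]
    rw [hr2]
    have hsq : Real.sqrt (r^2 - t^2) ^ 2 = r^2 - t^2 := Real.sq_sqrt hpos.le
    set u := Real.sqrt (r^2 - t^2) with hu
    field_simp
    linear_combination hsq
  have hint : IntervalIntegrable (fun t => Real.sqrt (r^2 - t^2)) volume a r := by
    apply Continuous.intervalIntegrable
    exact Real.continuous_sqrt.comp (by continuity)
  rw [intervalIntegral.integral_eq_sub_of_hasDerivAt_of_le har hcont hderiv hint]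
  simp only [hF]
  rw [div_self hr.ne', Real.arcsin_one]
  have : r^2 - r^2 = 0 := by ring
  rw [this, Real.sqrt_zero]
  ring

noncomputable def lensInt (r d : ℝ) : ℝ → ℝ :=
  fun t => 2 * Real.sqrt (r^2 - max (t^2) ((t-d)^2))

lemma lensInt_cont (r d : ℝ) : Continuous (lensInt r d) := by
  unfold lensInt
  exact continuous_const.mul (Real.continuous_sqrt.comp (by continuity))

lemma lensInt_integrable (r d : ℝ) (hr : 0 ≤ r) (hd : 0 ≤ d) : Integrable (lensInt r d) := by
  apply (lensInt_cont r d).integrable_of_hasCompactSupport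
  apply HasCompactSupport.intro (isCompact_Icc (a := -r) (b := d + r))
  intro t ht
  simp only [mem_Icc, not_and_or, not_le] at ht
  have hneg : r^2 - max (t^2) ((t-d)^2) < 0 := by
    rcases ht with h | h
    · have h2 : r^2 < t^2 := by nlinarith
      have := le_max_left (t^2) ((t-d)^2)
      linarith
    · have h2 : r^2 < (t-d)^2 := by nlinarith
      have := le_max_right (t^2) ((t-d)^2)
      linarith
  unfold lensInt
  rw [Real.sqrt_eq_zero'.mpr hneg.le, mul_zero]

lemma vol_lens_prod (r d : ℝ) (hr : 0 < r) (hd : 0 ≤ d) :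
    volume {p : ℝ × ℝ | p.1^2 + p.2^2 ≤ r^2 ∧ (p.1-d)^2 + p.2^2 ≤ r^2}
      = ENNReal.ofReal (∫ t : ℝ, lensInt r d t) := by
  have hmeas : MeasurableSet {p : ℝ × ℝ | p.1^2 + p.2^2 ≤ r^2 ∧ (p.1-d)^2 + p.2^2 ≤ r^2} := by
    apply MeasurableSet.inter
    · exact measurableSet_le ((continuous_fst.pow 2).add (continuous_snd.pow 2)).measurable
        measurable_const
    · exact measurableSet_le (((continuous_fst.sub continuous_const).pow 2).add
        (continuous_snd.pow 2)).measurable measurable_const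
  rw [Measure.volume_eq_prod, Measure.prod_apply hmeas]
  have hslice : ∀ t : ℝ,
      volume (Prod.mk t ⁻¹' {p : ℝ × ℝ | p.1^2 + p.2^2 ≤ r^2 ∧ (p.1-d)^2 + p.2^2 ≤ r^2})
        = ENNReal.ofReal (lensInt r d t) := by
    intro t
    have hset : Prod.mk t ⁻¹' {p : ℝ × ℝ | p.1^2 + p.2^2 ≤ r^2 ∧ (p.1-d)^2 + p.2^2 ≤ r^2}
        = {b : ℝ | b^2 ≤ r^2 - max (t^2) ((t-d)^2)} := by
      ext b
      simp only [mem_preimage, mem_setOf_eq]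
      constructor
      · rintro ⟨h1, h2⟩
        have := max_le (show t^2 ≤ r^2 - b^2 by linarith) (show (t-d)^2 ≤ r^2 - b^2 by linarith)
        linarith
      · intro h
        have h1 := le_max_left (t^2) ((t-d)^2)
        have h2 := le_max_right (t^2) ((t-d)^2)
        exact ⟨by linarith, by linarith⟩
    rw [hset]
    set c := r^2 - max (t^2) ((t-d)^2) with hc
    rcases le_or_gt 0 c with h | h
    · have hIcc : {b : ℝ | b^2 ≤ c} = Icc (-Real.sqrt c) (Real.sqrt c) := by
        ext b
        simp only [mem_setOf_eq, mem_Icc]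
        rw [← abs_le, ← Real.sqrt_sq_eq_abs, Real.sqrt_le_sqrt_iff h]
      rw [hIcc, Real.volume_Icc]
      unfold lensInt
      rw [← hc]
      congr 1
      ring
    · have hemp : {b : ℝ | b^2 ≤ c} = ∅ := by
        ext b
        simp only [mem_setOf_eq, mem_empty_iff_false, iff_false, not_le]
        nlinarith [sq_nonneg b]
      rw [hemp]
      unfold lensInt
      rw [← hc, Real.sqrt_eq_zero'.mpr h.le, mul_zero]
      simp
  simp_rw [hslice]
  rw [← MeasureTheory.ofReal_integral_eq_lintegral_ofReal (lensInt_integrable r d hr.le hd)]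
  filter_upwards with t
  unfold lensInt
  positivity


lemma lensInt_eval (r d : ℝ) (hr : 0 < r) (hd : 0 ≤ d) (hd2 : d ≤ 2*r) :
    ∫ t : ℝ, lensInt r d t = 4 * ∫ t in (d/2)..r, Real.sqrt (r^2 - t^2) := by
  have hdr : d - r ≤ d/2 := by linarith
  have hdr2 : d/2 ≤ r := by linarith
  have hsupp : ∀ t ∉ Icc (d - r) r, lensInt r d t = 0 := by
    intro t ht
    simp only [mem_Icc, not_and_or, not_le] at ht
    have hneg : r^2 - max (t^2) ((t-d)^2) ≤ 0 := by
      rcases ht with h | h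
      · have h2 : r^2 ≤ (t-d)^2 := by nlinarith
        have := le_max_right (t^2) ((t-d)^2)
        linarith
      · have h2 : r^2 ≤ t^2 := by nlinarith
        have := le_max_left (t^2) ((t-d)^2)
        linarith
    unfold lensInt
    rw [Real.sqrt_eq_zero'.mpr hneg, mul_zero]
  rw [← MeasureTheory.setIntegral_eq_integral_of_forall_compl_eq_zero hsupp,
    MeasureTheory.integral_Icc_eq_integral_Ioc,
    ← intervalIntegral.integral_of_le (by linarith : d - r ≤ r)]
  have hcont : Continuous (lensInt r d) := by
    unfold lensInt
    exact continuous_const.mul (Real.continuous_sqrt.comp (by continuity))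
  rw [← intervalIntegral.integral_add_adjacent_intervals (b := d/2)
    (hcont.intervalIntegrable _ _) (hcont.intervalIntegrable _ _)]
  have h1 : ∫ t in (d-r)..(d/2), lensInt r d t
      = ∫ t in (d-r)..(d/2), (fun u => 2 * Real.sqrt (r^2 - u^2)) (d - t) := by
    apply intervalIntegral.integral_congr
    intro t ht
    rw [uIcc_of_le hdr] at ht
    have htd : t ≤ d/2 := ht.2
    have hmax : max (t^2) ((t-d)^2) = (t-d)^2 :=
      max_eq_right (by nlinarith)
    unfold lensInt
    rw [hmax]
    have : (t - d)^2 = (d - t)^2 := by ring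
    rw [this]
  have h2 : ∫ t in (d/2)..r, lensInt r d t = ∫ t in (d/2)..r, 2 * Real.sqrt (r^2 - t^2) := by
    apply intervalIntegral.integral_congr
    intro t ht
    rw [uIcc_of_le hdr2] at ht
    have htd : d/2 ≤ t := ht.1
    have hmax : max (t^2) ((t-d)^2) = t^2 := max_eq_left (by nlinarith)
    unfold lensInt
    rw [hmax]
  rw [h1, h2, intervalIntegral.integral_comp_sub_left (fun u => 2 * Real.sqrt (r^2 - u^2)) d]
  have : d - (d - r) = r := by ring
  rw [this]
  have : d - d/2 = d/2 := by ring
  rw [this, intervalIntegral.integral_const_mul]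
  ring

lemma ball_mem_sq {z c : EuclideanSpace ℝ (Fin 2)} {r : ℝ} (hr : 0 ≤ r) :
    z ∈ Metric.closedBall c r ↔ (z 0 - c 0)^2 + (z 1 - c 1)^2 ≤ r^2 := by
  rw [Metric.mem_closedBall, EuclideanSpace.dist_eq, Real.sqrt_le_left hr, Fin.sum_univ_two]
  simp [Real.dist_eq, sq_abs]

lemma vol_inter_balls (x y : EuclideanSpace ℝ (Fin 2)) (r : ℝ) (hr : 0 < r) :
    volume (Metric.closedBall x r ∩ Metric.closedBall y r)
      = volume {p : ℝ × ℝ | p.1^2 + p.2^2 ≤ r^2 ∧ (p.1 - ‖y - x‖)^2 + p.2^2 ≤ r^2} := by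
  set d := ‖y - x‖ with hdd
  have hd : 0 ≤ d := norm_nonneg _
  set w : EuclideanSpace ℝ (Fin 2) := EuclideanSpace.single 0 d with hw
  have hnw : ‖w‖ = ‖y - x‖ := by
    rw [hw, EuclideanSpace.norm_single, Real.norm_eq_abs, abs_of_nonneg hd]
  -- step 1: translate
  have step1 : volume (Metric.closedBall x r ∩ Metric.closedBall y r)
      = volume (Metric.closedBall (0 : EuclideanSpace ℝ (Fin 2)) r ∩
          Metric.closedBall (y - x) r) := by
    have : (x + ·) ⁻¹' (Metric.closedBall x r ∩ Metric.closedBall y r)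
        = Metric.closedBall (0 : EuclideanSpace ℝ (Fin 2)) r ∩ Metric.closedBall (y - x) r := by
      ext z
      simp only [mem_preimage, mem_inter_iff, Metric.mem_closedBall, dist_eq_norm]
      constructor
      · rintro ⟨h1, h2⟩
        constructor
        · simpa using h1
        · convert h2 using 2; abel
      · rintro ⟨h1, h2⟩
        constructor
        · simpa using h1
        · convert h2 using 2; abel
    rw [← this, measure_preimage_add]
  -- step 2: rotate
  have step2 : volume (Metric.closedBall (0 : EuclideanSpace ℝ (Fin 2)) r ∩
          Metric.closedBall (y - x) r)
      = volume (Metric.closedBall (0 : EuclideanSpace ℝ (Fin 2)) r ∩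
          Metric.closedBall w r) := by
    obtain ⟨L, hLw⟩ : ∃ L : EuclideanSpace ℝ (Fin 2) ≃ₗᵢ[ℝ] EuclideanSpace ℝ (Fin 2),
        L w = y - x :=
      ⟨Submodule.reflection (Submodule.span ℝ {w - (y - x)})ᗮ, Submodule.reflection_sub (by rw [hnw])⟩
    have hpre : ⇑L ⁻¹'
        (Metric.closedBall (0 : EuclideanSpace ℝ (Fin 2)) r ∩ Metric.closedBall (y - x) r)
        = Metric.closedBall (0 : EuclideanSpace ℝ (Fin 2)) r ∩ Metric.closedBall w r := by
      ext z
      simp only [mem_preimage, mem_inter_iff, Metric.mem_closedBall, dist_eq_norm]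
      rw [← hLw, show L z - L w = L (z - w) by rw [map_sub], sub_zero, sub_zero]
      rw [L.norm_map, L.norm_map]
    exact (L.measurePreserving.measure_preimage
      ((Metric.isClosed_closedBall.measurableSet.inter
        Metric.isClosed_closedBall.measurableSet).nullMeasurableSet)).symm.trans
      (congrArg volume hpre)
  -- step 3: coordinates
  have step3 : volume (Metric.closedBall (0 : EuclideanSpace ℝ (Fin 2)) r ∩
          Metric.closedBall w r)
      = volume {p : ℝ × ℝ | p.1^2 + p.2^2 ≤ r^2 ∧ (p.1 - d)^2 + p.2^2 ≤ r^2} := by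
    set F : ℝ × ℝ → EuclideanSpace ℝ (Fin 2) :=
      (MeasurableEquiv.toLp 2 (Fin 2 → ℝ)) ∘ (MeasurableEquiv.piFinTwo (fun _ => ℝ)).symm
      with hF
    have hFpres : MeasurePreserving F :=
      ((EuclideanSpace.volume_preserving_symm_measurableEquiv_toLp (Fin 2)).symm).comp
        (volume_preserving_piFinTwo (fun _ => ℝ)).symm
    have happ : ∀ (p : ℝ × ℝ), (F p 0 = p.1 ∧ F p 1 = p.2) := by
      intro p
      constructor <;> rfl
    have hpre : F ⁻¹' (Metric.closedBall (0 : EuclideanSpace ℝ (Fin 2)) r ∩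
          Metric.closedBall w r)
        = {p : ℝ × ℝ | p.1^2 + p.2^2 ≤ r^2 ∧ (p.1 - d)^2 + p.2^2 ≤ r^2} := by
      ext p
      simp only [mem_preimage, mem_inter_iff, mem_setOf_eq]
      rw [ball_mem_sq hr.le, ball_mem_sq hr.le, (happ p).1, (happ p).2]
      have hw0 : w 0 = d := by rw [hw]; simp
      have hw1 : w 1 = (0 : ℝ) := by rw [hw]; simp [EuclideanSpace.single_apply]
      rw [hw0, hw1]
      norm_num
    rw [← hpre]
    exact (hFpres.measure_preimage ((Metric.isClosed_closedBall.measurableSet.inter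
        Metric.isClosed_closedBall.measurableSet).nullMeasurableSet)).symm
  rw [step1, step2, step3]
lemma vol_inter_key (s : ℝ) (hs : 0 < s) (x y : EuclideanSpace ℝ (Fin 2)) :
    (volume (Metric.closedBall x (s/2) ∩ Metric.closedBall y (s/2))).toReal
      = (π * s^2 / 4) * euclidHat (‖x - y‖ / s) := by
  set d := ‖y - x‖ with hdd
  have hxy : ‖x - y‖ = d := by rw [hdd, norm_sub_rev]
  have hd : 0 ≤ d := norm_nonneg _
  rw [hxy]
  rcases le_or_gt d s with hds | hds
  · -- overlapping case
    have hr : (0:ℝ) < s/2 := by linarith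
    have hd2 : d ≤ 2*(s/2) := by linarith
    have hw1 : d / s ≤ 1 := by
      rw [div_le_one hs]; exact hds
    have hsd : (0:ℝ) ≤ s^2 - d^2 := by nlinarith
    have hnn : 0 ≤ 4 * ∫ t in (d/2)..(s/2), Real.sqrt ((s/2)^2 - t^2) := by
      have : 0 ≤ ∫ t in (d/2)..(s/2), Real.sqrt ((s/2)^2 - t^2) :=
        intervalIntegral.integral_nonneg (by linarith) (fun t _ => Real.sqrt_nonneg _)
      linarith
    rw [vol_inter_balls x y (s/2) hr, vol_lens_prod (s/2) d hr hd,
      lensInt_eval (s/2) d hr hd hd2, ENNReal.toReal_ofReal hnn,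
      ftc_sqrt (s/2) (d/2) hr (by linarith) (by linarith)]
    rw [euclidHat, if_pos hw1, Real.arccos_eq_pi_div_two_sub_arcsin]
    have e0 : (d/2)/(s/2) = d/s := by
      field_simp
    have e1 : (s/2)^2 - (d/2)^2 = (s^2-d^2)/4 := by ring
    have e2 : 1 - (d/s)^2 = (s^2-d^2)/s^2 := by field_simp
    rw [e0, e1, e2, Real.sqrt_div hsd, Real.sqrt_div hsd, Real.sqrt_sq hs.le,
      show Real.sqrt 4 = 2 by
        rw [show (4:ℝ) = 2^2 by norm_num, Real.sqrt_sq (by norm_num : (0:ℝ) ≤ 2)]]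
    field_simp
    ring
  · -- disjoint case
    have hdisj : Disjoint (Metric.closedBall x (s/2)) (Metric.closedBall y (s/2)) := by
      apply Metric.closedBall_disjoint_closedBall
      rw [dist_eq_norm, hxy]
      linarith
    rw [Set.disjoint_iff_inter_eq_empty.mp hdisj]
    simp only [measure_empty, ENNReal.toReal_zero]
    rw [euclidHat, if_neg (by rw [not_le, lt_div_iff₀ hs]; linarith)]
    ring

theorem euclidHat_quadratic_identity
    (n : ℕ) (hn : 1 ≤ n) (s : ℝ) (hs : 0 < s)
    (x : Fin n → EuclideanSpace ℝ (Fin 2))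
    (σ : Fin n → ℝ) (hσ : ∀ j, σ j = 1 ∨ σ j = -1) :
    ∑ i : Fin n, ∑ j : Fin n, σ i * σ j * euclidHat (‖x i - x j‖ / s)
      = (4 / (π * s ^ 2)) *
          ∫ z : EuclideanSpace ℝ (Fin 2),
            (∑ j : Fin n,
              σ j * Set.indicator (Metric.closedBall (x j) (s / 2)) (fun _ => (1 : ℝ)) z) ^ 2 := by
  have hπ : (π : ℝ) ≠ 0 := Real.pi_ne_zero
  have hmeas : ∀ i j : Fin n,
      MeasurableSet (Metric.closedBall (x i) (s/2) ∩ Metric.closedBall (x j) (s/2)) :=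
    fun i j => Metric.isClosed_closedBall.measurableSet.inter Metric.isClosed_closedBall.measurableSet
  have hIntegr : ∀ i j : Fin n, Integrable (fun z : EuclideanSpace ℝ (Fin 2) =>
      σ i * σ j * Set.indicator (Metric.closedBall (x i) (s/2) ∩ Metric.closedBall (x j) (s/2))
        (fun _ => (1:ℝ)) z) := by
    intro i j
    apply Integrable.const_mul
    rw [integrable_indicator_iff (hmeas i j)]
    apply (integrableOn_const_iff enorm_ne_top).mpr
    exact Or.inr (lt_of_le_of_lt (measure_mono Set.inter_subset_left) measure_closedBall_lt_top)
  have hsq : ∀ z : EuclideanSpace ℝ (Fin 2),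
      (∑ j : Fin n, σ j * Set.indicator (Metric.closedBall (x j) (s/2)) (fun _ => (1:ℝ)) z) ^ 2
        = ∑ i : Fin n, ∑ j : Fin n, σ i * σ j *
            Set.indicator (Metric.closedBall (x i) (s/2) ∩ Metric.closedBall (x j) (s/2))
              (fun _ => (1:ℝ)) z := by
    intro z
    rw [sq, Finset.sum_mul_sum]
    refine Finset.sum_congr rfl (fun i _ => Finset.sum_congr rfl (fun j _ => ?_))
    rw [show Set.indicator (Metric.closedBall (x i) (s/2) ∩ Metric.closedBall (x j) (s/2))
          (fun _ => (1:ℝ)) z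
        = Set.indicator (Metric.closedBall (x i) (s/2)) (fun _ => (1:ℝ)) z
          * Set.indicator (Metric.closedBall (x j) (s/2)) (fun _ => (1:ℝ)) z from by
      simpa using Set.inter_indicator_mul (s := Metric.closedBall (x i) (s/2))
        (t := Metric.closedBall (x j) (s/2)) (fun _ => (1:ℝ)) (fun _ => (1:ℝ)) z]
    ring
  have hInt : ∫ z : EuclideanSpace ℝ (Fin 2),
      (∑ j : Fin n, σ j * Set.indicator (Metric.closedBall (x j) (s/2)) (fun _ => (1:ℝ)) z) ^ 2
        = ∑ i : Fin n, ∑ j : Fin n, σ i * σ j *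
            ((π * s ^ 2 / 4) * euclidHat (‖x i - x j‖ / s)) := by
    simp_rw [hsq]
    rw [MeasureTheory.integral_finset_sum _
      (fun i _ => integrable_finset_sum _ (fun j _ => hIntegr i j))]
    refine Finset.sum_congr rfl (fun i _ => ?_)
    rw [MeasureTheory.integral_finset_sum _ (fun j _ => hIntegr i j)]
    refine Finset.sum_congr rfl (fun j _ => ?_)
    rw [MeasureTheory.integral_const_mul, MeasureTheory.integral_indicator (hmeas i j),
      MeasureTheory.setIntegral_const, smul_eq_mul, mul_one, measureReal_def,
      vol_inter_key s hs (x i) (x j)]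
  rw [hInt]
  have : ∀ i j : Fin n, σ i * σ j * ((π * s ^ 2 / 4) * euclidHat (‖x i - x j‖ / s))
      = (π * s ^ 2 / 4) * (σ i * σ j * euclidHat (‖x i - x j‖ / s)) := fun i j => by ring
  simp_rw [this, ← Finset.mul_sum]
  rw [← mul_assoc]
  have hc : 4 / (π * s ^ 2) * (π * s ^ 2 / 4) = 1 := by
    field_simp
  rw [hc, one_mul]
end

section
/- For every s > 0 and every x ∈ ℝ², the normalized self-convolution of the indicator function of the disc of radius s/2 equals the Euclid's hat: (4/(π s²)) · ∫_{ℝ²} 𝟙_{B(0, s/2)}(x − y) · 𝟙_{B(0, s/2)}(y) dy = h(|x|/s), where 𝟙_{B(0, r)} is the indicator function of the closed Euclidean ball of radius r centered at the origin of ℝ². -/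
open Real MeasureTheory intervalIntegral

noncomputable def Fslice (r d t : ℝ) : ℝ :=
  2 * Real.sqrt (max 0 (min (r^2 - t^2) (r^2 - (t - d)^2)))

lemma intSqrt (r w : ℝ) (hr : 0 < r) (hw0 : 0 ≤ w) (hw1 : w ≤ 1) :
    ∫ t in (r*w)..r, 2 * Real.sqrt (r^2 - t^2)
      = r^2 * (Real.arccos w - w * Real.sqrt (1 - w^2)) := by
  have hsub : (∫ θ in (Real.arcsin w)..(π/2), (r * Real.cos θ) •
      ((fun t => 2 * Real.sqrt (r^2 - t^2)) ∘ (fun θ => r * Real.sin θ)) θ)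
      = ∫ t in (r * Real.sin (Real.arcsin w))..(r * Real.sin (π/2)),
        2 * Real.sqrt (r^2 - t^2) := by
    apply intervalIntegral.integral_comp_smul_deriv
    · intro θ _
      simpa [mul_comm] using (Real.hasDerivAt_sin θ).const_mul r
    · fun_prop
    · fun_prop
  rw [Real.sin_arcsin (by linarith) hw1, Real.sin_pi_div_two, mul_one] at hsub
  rw [← hsub]
  have hcong : (∫ θ in (Real.arcsin w)..(π/2), (r * Real.cos θ) •
      ((fun t => 2 * Real.sqrt (r^2 - t^2)) ∘ (fun θ => r * Real.sin θ)) θ)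
      = ∫ θ in (Real.arcsin w)..(π/2), (2 * r^2) * Real.cos θ ^ 2 := by
    apply intervalIntegral.integral_congr
    intro θ hθ
    have h1 : Real.arcsin w ≤ θ ∧ θ ≤ π/2 := by
      rcases hθ with ⟨h, h'⟩
      constructor
      · simpa [min_eq_left (Real.arcsin_le_pi_div_two w)] using h
      · simpa [max_eq_right (Real.arcsin_le_pi_div_two w)] using h'
    have hcos : 0 ≤ Real.cos θ := by
      apply Real.cos_nonneg_of_mem_Icc
      exact ⟨le_trans (Real.neg_pi_div_two_le_arcsin w) h1.1, h1.2⟩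
    have : r^2 - (r * Real.sin θ)^2 = (r * Real.cos θ)^2 := by
      have := Real.sin_sq_add_cos_sq θ; ring_nf; nlinarith [Real.sin_sq_add_cos_sq θ]
    simp only [Function.comp_apply, smul_eq_mul, this]
    rw [Real.sqrt_sq (by positivity)]
    ring
  rw [hcong, intervalIntegral.integral_const_mul, integral_cos_sq]
  rw [Real.cos_pi_div_two, Real.sin_arcsin (by linarith) hw1, Real.cos_arcsin,
    Real.arccos]
  ring

lemma Fslice_cont (r d : ℝ) : Continuous (Fslice r d) := by
  unfold Fslice; fun_prop

lemma Fslice_symm (r d t : ℝ) : Fslice r d (d - t) = Fslice r d t := by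
  unfold Fslice
  rw [show (d - t - d)^2 = t^2 from by ring, show (d - t)^2 = (t - d)^2 from by ring, min_comm]

lemma intF (r d : ℝ) (hr : 0 < r) (hd0 : 0 ≤ d) (hd : d ≤ 2*r) :
    ∫ t : ℝ, Fslice r d t
      = 2 * (r^2 * (Real.arccos (d/(2*r)) - (d/(2*r)) * Real.sqrt (1 - (d/(2*r))^2))) := by
  have hsupp : Function.support (Fslice r d) ⊆ Set.Ioc (d - r) r := by
    intro t ht
    simp only [Function.support, Set.mem_setOf_eq, Fslice] at ht
    have hpos : 0 < max 0 (min (r^2 - t^2) (r^2 - (t - d)^2)) := by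
      rcases lt_or_eq_of_le (le_max_left 0 (min (r^2 - t^2) (r^2 - (t - d)^2))) with h | h
      · exact h
      · exfalso; apply ht; rw [← h, Real.sqrt_zero, mul_zero]
    have h1 : 0 < min (r^2 - t^2) (r^2 - (t - d)^2) := by
      rcases max_cases 0 (min (r^2 - t^2) (r^2 - (t - d)^2)) with ⟨he, _⟩ | ⟨he, _⟩
      · rw [he] at hpos; linarith [hpos]
      · rwa [he] at hpos
    have h2 : t^2 < r^2 := by have := min_le_left (r^2 - t^2) (r^2 - (t-d)^2); nlinarith
    have h3 : (t - d)^2 < r^2 := by have := min_le_right (r^2 - t^2) (r^2 - (t-d)^2); nlinarith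
    constructor
    · nlinarith
    · nlinarith
  have hint : ∀ a b : ℝ, IntervalIntegrable (Fslice r d) volume a b :=
    fun a b => (Fslice_cont r d).intervalIntegrable a b
  rw [← intervalIntegral.integral_eq_integral_of_support_subset hsupp]
  have hsplit : ∫ t in (d-r)..r, Fslice r d t
      = (∫ t in (d-r)..(d/2), Fslice r d t) + ∫ t in (d/2)..r, Fslice r d t :=
    (intervalIntegral.integral_add_adjacent_intervals (hint _ _) (hint _ _)).symm
  have hrefl : ∫ t in (d-r)..(d/2), Fslice r d t = ∫ t in (d/2)..r, Fslice r d t := by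
    have := intervalIntegral.integral_comp_sub_left (a := d/2) (b := r) (Fslice r d) d
    have h2 : ∫ x in (d/2)..r, Fslice r d (d - x) = ∫ x in (d/2)..r, Fslice r d x :=
      intervalIntegral.integral_congr (fun x _ => Fslice_symm r d x)
    rw [h2, show d - d/2 = d/2 from by ring] at this
    exact this.symm
  have hmain : ∫ t in (d/2)..r, Fslice r d t = ∫ t in (d/2)..r, 2 * Real.sqrt (r^2 - t^2) := by
    apply intervalIntegral.integral_congr
    intro t ht
    have hdr : d/2 ≤ r := by linarith
    rw [Set.uIcc_of_le hdr] at ht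
    obtain ⟨ht1, ht2⟩ := ht
    have hmin : min (r^2 - t^2) (r^2 - (t - d)^2) = r^2 - t^2 := by
      apply min_eq_left; nlinarith
    have hnn : 0 ≤ r^2 - t^2 := by nlinarith
    unfold Fslice
    rw [hmin, max_eq_right hnn]
  have hw0 : 0 ≤ d/(2*r) := by positivity
  have hw1 : d/(2*r) ≤ 1 := by rw [div_le_one (by linarith)]; linarith
  have hrw : r * (d/(2*r)) = d/2 := by field_simp
  have := intSqrt r (d/(2*r)) hr hw0 hw1
  rw [hrw] at this
  rw [hsplit, hrefl, hmain, this]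
  ring

lemma volA (r d : ℝ) :
    volume {p : ℝ × ℝ | p.1^2 + p.2^2 ≤ r^2 ∧ (p.1 - d)^2 + p.2^2 ≤ r^2}
      = ∫⁻ t : ℝ, ENNReal.ofReal (Fslice r d t) := by
  have hA : MeasurableSet {p : ℝ × ℝ | p.1^2 + p.2^2 ≤ r^2 ∧ (p.1 - d)^2 + p.2^2 ≤ r^2} := by
    have : {p : ℝ × ℝ | p.1^2 + p.2^2 ≤ r^2 ∧ (p.1 - d)^2 + p.2^2 ≤ r^2}
        = {p : ℝ × ℝ | p.1^2 + p.2^2 ≤ r^2} ∩ {p : ℝ × ℝ | (p.1 - d)^2 + p.2^2 ≤ r^2} := rfl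
    rw [this]
    exact ((isClosed_le (by fun_prop) continuous_const).measurableSet).inter
      ((isClosed_le (by fun_prop) continuous_const).measurableSet)
  rw [Measure.volume_eq_prod, Measure.prod_apply hA]
  apply lintegral_congr
  intro t
  have hpre : Prod.mk t ⁻¹' {p : ℝ × ℝ | p.1^2 + p.2^2 ≤ r^2 ∧ (p.1 - d)^2 + p.2^2 ≤ r^2}
      = {u : ℝ | u^2 ≤ min (r^2 - t^2) (r^2 - (t - d)^2)} := by
    ext u
    simp only [Set.mem_preimage, Set.mem_setOf_eq, le_min_iff]
    constructor
    · rintro ⟨h1, h2⟩; exact ⟨by linarith, by linarith⟩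
    · rintro ⟨h1, h2⟩; exact ⟨by linarith, by linarith⟩
  rw [hpre]
  set c := min (r^2 - t^2) (r^2 - (t - d)^2) with hc
  rcases le_or_gt 0 c with h | h
  · have : {u : ℝ | u^2 ≤ c} = Set.Icc (-Real.sqrt c) (Real.sqrt c) := by
      ext u
      simp only [Set.mem_setOf_eq, Set.mem_Icc]
      rw [← abs_le, ← Real.sqrt_sq_eq_abs, Real.sqrt_le_sqrt_iff h]
    rw [this, Real.volume_Icc]
    unfold Fslice
    rw [max_eq_right h]
    congr 1
    ring
  · have : {u : ℝ | u^2 ≤ c} = ∅ := by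
      ext u
      simp only [Set.mem_setOf_eq, Set.mem_empty_iff_false, iff_false, not_le]
      exact lt_of_lt_of_le h (sq_nonneg u)
    rw [this, measure_empty]
    unfold Fslice
    rw [max_eq_left h.le, Real.sqrt_zero, mul_zero, ENNReal.ofReal_zero]

lemma Fslice_integrable (r d : ℝ) (hr : 0 < r) : Integrable (Fslice r d) := by
  apply Continuous.integrable_of_hasCompactSupport (by unfold Fslice; fun_prop)
  apply HasCompactSupport.intro (isCompact_Icc (a := -r) (b := r))
  intro t ht
  simp only [Set.mem_Icc, not_and_or, not_le] at ht
  have h1 : r^2 - t^2 ≤ 0 := by rcases ht with h | h <;> nlinarith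
  unfold Fslice
  rw [max_eq_left (le_trans (min_le_left _ _) h1), Real.sqrt_zero, mul_zero]

theorem euclidHat_eq_normalized_self_convolution'
    (s : ℝ) (hs : 0 < s) (x : EuclideanSpace ℝ (Fin 2)) :
    (4 / (π * s ^ 2)) *
        ∫ y : EuclideanSpace ℝ (Fin 2),
          Set.indicator (Metric.closedBall (0 : EuclideanSpace ℝ (Fin 2)) (s / 2))
              (fun _ => (1 : ℝ)) (x - y) *
            Set.indicator (Metric.closedBall (0 : EuclideanSpace ℝ (Fin 2)) (s / 2))
              (fun _ => (1 : ℝ)) y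
      = (if (‖x‖ / s) ≤ 1 then
          (2 / π) * (Real.arccos (‖x‖/s) - (‖x‖/s) * Real.sqrt (1 - (‖x‖/s) ^ 2)) else 0) := by
  set r : ℝ := s / 2 with hrdef
  have hr : 0 < r := by positivity
  set S := Metric.closedBall x r ∩ Metric.closedBall (0 : EuclideanSpace ℝ (Fin 2)) r with hSdef
  have hS : MeasurableSet S :=
    Metric.isClosed_closedBall.measurableSet.inter Metric.isClosed_closedBall.measurableSet
  have hint : (∫ y : EuclideanSpace ℝ (Fin 2),
          Set.indicator (Metric.closedBall (0 : EuclideanSpace ℝ (Fin 2)) (s / 2))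
              (fun _ => (1 : ℝ)) (x - y) *
            Set.indicator (Metric.closedBall (0 : EuclideanSpace ℝ (Fin 2)) (s / 2))
              (fun _ => (1 : ℝ)) y)
      = (volume S).toReal := by
    rw [← measureReal_def, ← integral_indicator_one hS]
    apply MeasureTheory.integral_congr_ae
    filter_upwards with y
    have key : (x - y ∈ Metric.closedBall (0 : EuclideanSpace ℝ (Fin 2)) (s/2))
        ↔ y ∈ Metric.closedBall x r := by
      rw [mem_closedBall_zero_iff, Metric.mem_closedBall, dist_eq_norm, norm_sub_rev, hrdef]
    have hSmem : (y ∈ S) ↔ (y ∈ Metric.closedBall x r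
        ∧ y ∈ Metric.closedBall (0 : EuclideanSpace ℝ (Fin 2)) (s/2)) := by
      rw [hSdef, Set.mem_inter_iff, hrdef]
    by_cases ha : y ∈ Metric.closedBall x r <;>
      by_cases hb : y ∈ Metric.closedBall (0 : EuclideanSpace ℝ (Fin 2)) (s/2) <;>
      simp [Set.indicator_apply, ha, hb, key, hSmem]
  rw [hint]
  rcases le_or_gt ‖x‖ s with hxs | hxs
  · -- main case
    set d : ℝ := ‖x‖ with hddef
    set v : EuclideanSpace ℝ (Fin 2) := d • EuclideanSpace.single (0 : Fin 2) (1:ℝ) with hvdef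
    have hnv : ‖x‖ = ‖v‖ := by
      rw [hvdef, norm_smul, EuclideanSpace.norm_single, norm_one, mul_one, hddef,
        Real.norm_eq_abs, abs_of_nonneg (norm_nonneg x)]
    have hrot : volume S = volume (Metric.closedBall v r ∩ Metric.closedBall 0 r) := by
      set f := Submodule.reflection (ℝ ∙ (x - v))ᗮ with hfdef
      have hfx : f x = v := Submodule.reflection_sub hnv
      have hpre : f ⁻¹' (Metric.closedBall v r ∩ Metric.closedBall 0 r) = S := by
        ext y
        simp only [Set.mem_preimage, Set.mem_inter_iff, Metric.mem_closedBall, hSdef]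
        have e1 : dist (f y) v = dist y x := by rw [← hfx, f.dist_map]
        have e2 : dist (f y) 0 = dist y 0 := by
          calc dist (f y) 0 = dist (f y) (f 0) := by rw [map_zero]
          _ = dist y 0 := f.dist_map y 0
        rw [e1, e2]
      rw [← hpre]
      exact f.measurePreserving.measure_preimage
        (Metric.isClosed_closedBall.measurableSet.inter
          Metric.isClosed_closedBall.measurableSet).nullMeasurableSet
    set A : Set (ℝ × ℝ) := {p : ℝ × ℝ | p.1^2 + p.2^2 ≤ r^2 ∧ (p.1 - d)^2 + p.2^2 ≤ r^2}
      with hAdef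
    have hAmeas : MeasurableSet A := by
      have : A = {p : ℝ × ℝ | p.1^2 + p.2^2 ≤ r^2} ∩ {p : ℝ × ℝ | (p.1 - d)^2 + p.2^2 ≤ r^2} :=
        rfl
      rw [this]
      exact ((isClosed_le (by fun_prop) continuous_const).measurableSet).inter
        ((isClosed_le (by fun_prop) continuous_const).measurableSet)
    have hcoord : volume (Metric.closedBall v r ∩ Metric.closedBall 0 r) = volume A := by
      set φ : EuclideanSpace ℝ (Fin 2) → ℝ × ℝ :=
        (MeasurableEquiv.piFinTwo (fun _ : Fin 2 => ℝ)) ∘ (MeasurableEquiv.toLp 2 (Fin 2 → ℝ)).symm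
        with hφdef
      have hφ : MeasurePreserving φ volume volume :=
        (volume_preserving_piFinTwo (fun _ : Fin 2 => ℝ)).comp
          (EuclideanSpace.volume_preserving_symm_measurableEquiv_toLp (Fin 2))
      have hnorm2 : ∀ z : EuclideanSpace ℝ (Fin 2), (‖z‖ ≤ r ↔ (z 0)^2 + (z 1)^2 ≤ r^2) := by
        intro z
        rw [EuclideanSpace.norm_eq, Fin.sum_univ_two, Real.norm_eq_abs, Real.norm_eq_abs,
          sq_abs, sq_abs, Real.sqrt_le_left hr.le]
      have hpre : φ ⁻¹' A = Metric.closedBall v r ∩ Metric.closedBall 0 r := by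
        ext y
        have hφy : φ y = (y 0, y 1) := rfl
        simp only [Set.mem_preimage, hφy, hAdef, Set.mem_setOf_eq, Set.mem_inter_iff,
          Metric.mem_closedBall, dist_eq_norm, sub_zero]
        have hc0 : (y - v) 0 = y 0 - d := by
          simp [hvdef, EuclideanSpace.single_apply]
        have hc1 : (y - v) 1 = y 1 := by
          simp [hvdef, EuclideanSpace.single_apply]
        rw [hnorm2 (y - v), hnorm2 y, hc0, hc1]
        tauto
      rw [← hpre]
      exact hφ.measure_preimage hAmeas.nullMeasurableSet
    have hvolA : volume A = ENNReal.ofReal (∫ t : ℝ, Fslice r d t) := by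
      rw [volA r d, ← ofReal_integral_eq_lintegral_ofReal (Fslice_integrable r d hr)]
      filter_upwards with t
      unfold Fslice
      positivity
    have hFnn : 0 ≤ ∫ t : ℝ, Fslice r d t := by
      apply MeasureTheory.integral_nonneg
      intro t
      unfold Fslice
      positivity
    have hd2r : d ≤ 2 * r := by rw [hrdef]; linarith
    have hIF := intF r d hr (norm_nonneg x) hd2r
    have h2rs : 2 * r = s := by rw [hrdef]; ring
    rw [hrot, hcoord, hvolA, ENNReal.toReal_ofReal hFnn, hIF, h2rs]
    have hle : d / s ≤ 1 := (div_le_one hs).mpr hxs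
    rw [if_pos hle]
    have hπ : π ≠ 0 := Real.pi_ne_zero
    have hs' : s ≠ 0 := ne_of_gt hs
    rw [hrdef]
    field_simp
    ring
  · -- disjoint case
    have hdisj : S = ∅ := by
      apply Set.disjoint_iff_inter_eq_empty.mp
      apply Metric.closedBall_disjoint_closedBall
      rw [dist_zero_right]
      rw [hrdef]; linarith
    rw [hdisj, measure_empty, ENNReal.toReal_zero, mul_zero]
    rw [if_neg]
    push_neg
    rw [lt_div_iff₀ hs]  -- 1 < ‖x‖/s ... careful direction
    linarith

theorem euclidHat_eq_normalized_self_convolution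
    (s : ℝ) (hs : 0 < s) (x : EuclideanSpace ℝ (Fin 2)) :
    (4 / (π * s ^ 2)) *
        ∫ y : EuclideanSpace ℝ (Fin 2),
          Set.indicator (Metric.closedBall (0 : EuclideanSpace ℝ (Fin 2)) (s / 2))
              (fun _ => (1 : ℝ)) (x - y) *
            Set.indicator (Metric.closedBall (0 : EuclideanSpace ℝ (Fin 2)) (s / 2))
              (fun _ => (1 : ℝ)) y
      = euclidHat (‖x‖ / s) := by
  rw [euclidHat_eq_normalized_self_convolution' s hs x, euclidHat]
end

section
/- For every x > 0, the function K₀ is differentiable with K₀′(x) = −K₁(x), and the function x ↦ x·K₁(x) is differentiable with derivative (x·K₁(x))′ = −x·K₀(x). -/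
open Real MeasureTheory

/-- Modified Bessel function of the second kind of order 0, via the integral
representation `K₀(x) = ∫₀^∞ e^{−x√(k²+1)} / √(k²+1) dk`. -/
noncomputable def K0 (x : ℝ) : ℝ :=
  ∫ k in Set.Ioi (0 : ℝ), Real.exp (-x * Real.sqrt (k ^ 2 + 1)) / Real.sqrt (k ^ 2 + 1)

/-- Modified Bessel function of the second kind of order 1, via the integral
representation `K₁(x) = ∫₀^∞ e^{−x√(k²+1)} dk`. -/
noncomputable def K1 (x : ℝ) : ℝ :=
  ∫ k in Set.Ioi (0 : ℝ), Real.exp (-x * Real.sqrt (k ^ 2 + 1))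

namespace BesselAux

open Set Filter Metric

noncomputable def s (k : ℝ) : ℝ := Real.sqrt (k ^ 2 + 1)

lemma s_pos (k : ℝ) : 0 < s k := Real.sqrt_pos.2 (by positivity)

lemma one_le_s (k : ℝ) : 1 ≤ s k := by
  have : Real.sqrt 1 ≤ s k := Real.sqrt_le_sqrt (by nlinarith)
  simpa using this

lemma le_s {k : ℝ} (hk : 0 ≤ k) : k ≤ s k := by
  have h := Real.sqrt_le_sqrt (show k ^ 2 ≤ k ^ 2 + 1 by linarith)
  rwa [Real.sqrt_sq hk] at h

lemma s_le {k : ℝ} (hk : 0 ≤ k) : s k ≤ k + 1 := by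
  have h := Real.sqrt_le_sqrt (show k ^ 2 + 1 ≤ (k + 1) ^ 2 by nlinarith)
  rwa [Real.sqrt_sq (by linarith)] at h

lemma continuous_s : Continuous s := by
  apply Real.continuous_sqrt.comp; continuity

lemma hasDerivAt_s (k : ℝ) : HasDerivAt s (k / s k) k := by
  have h : HasDerivAt (fun k : ℝ => k ^ 2 + 1) (2 * k) k := by
    simpa using ((hasDerivAt_pow 2 k).add_const 1)
  have := h.sqrt (by positivity)
  convert this using 1
  · rfl
  rw [s]
  field_simp

/-- Master integrability bound. -/
lemma integrable_master {c : ℝ} (hc : 0 < c) :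
    IntegrableOn (fun k : ℝ => (k + 1) * Real.exp (-c * k)) (Ioi 0) := by
  have hbase : IntegrableOn (fun k : ℝ => (2 / c + 1) * Real.exp (-(c / 2) * k)) (Ioi 0) :=
    (exp_neg_integrableOn_Ioi 0 (half_pos hc)).const_mul _
  refine hbase.integrable.mono' ?_ ?_
  · exact (Continuous.mul (by continuity) (by continuity)).aestronglyMeasurable
  · rw [ae_restrict_iff' measurableSet_Ioi]
    filter_upwards with k hk
    have hk0 : (0 : ℝ) < k := hk
    have h1 : k ≤ 2 / c * Real.exp (c / 2 * k) := by
      have := Real.add_one_le_exp (c / 2 * k)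
      have hck : c / 2 * k ≤ Real.exp (c / 2 * k) := by linarith
      calc k = 2 / c * (c / 2 * k) := by field_simp
        _ ≤ 2 / c * Real.exp (c / 2 * k) := by
            apply mul_le_mul_of_nonneg_left hck; positivity
    have h2 : Real.exp (-c * k) ≤ Real.exp (-(c / 2) * k) :=
      Real.exp_le_exp.2 (by nlinarith)
    have h3 : Real.exp (c / 2 * k) * Real.exp (-c * k) = Real.exp (-(c / 2) * k) := by
      rw [← Real.exp_add]; ring_nf
    have hnn : (0 : ℝ) ≤ (k + 1) * Real.exp (-c * k) := by positivity
    rw [Real.norm_eq_abs, abs_of_nonneg hnn]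
    have hke : k * Real.exp (-c * k) ≤ 2 / c * Real.exp (-(c / 2) * k) := by
      calc k * Real.exp (-c * k) ≤ 2 / c * Real.exp (c / 2 * k) * Real.exp (-c * k) := by
            apply mul_le_mul_of_nonneg_right h1 (Real.exp_pos _).le
        _ = 2 / c * Real.exp (-(c / 2) * k) := by rw [mul_assoc, h3]
    nlinarith [Real.exp_pos (-c * k)]

lemma integrable_of_bound {c : ℝ} (hc : 0 < c) {f : ℝ → ℝ} (hf : Continuous f)
    (hb : ∀ k : ℝ, 0 < k → ‖f k‖ ≤ (k + 1) * Real.exp (-c * k)) :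
    IntegrableOn f (Ioi 0) := by
  refine (integrable_master hc).integrable.mono' hf.aestronglyMeasurable ?_
  rw [ae_restrict_iff' measurableSet_Ioi]
  filter_upwards with k hk
  exact hb k hk

lemma int_exp {c : ℝ} (hc : 0 < c) :
    IntegrableOn (fun k : ℝ => Real.exp (-c * s k)) (Ioi 0) := by
  refine integrable_of_bound hc (by exact ((continuous_const.mul continuous_s : Continuous fun k => -c * s k)).rexp.comp continuous_id |>.comp continuous_id) ?_
  intro k hk
  rw [Real.norm_eq_abs, abs_of_nonneg (Real.exp_pos _).le]
  have h1 : Real.exp (-c * s k) ≤ Real.exp (-c * k) := by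
    apply Real.exp_le_exp.2
    have := le_s hk.le
    nlinarith
  nlinarith [Real.exp_pos (-c * k), hk]

lemma int_s_exp {c : ℝ} (hc : 0 < c) :
    IntegrableOn (fun k : ℝ => s k * Real.exp (-c * s k)) (Ioi 0) := by
  refine integrable_of_bound hc (continuous_s.mul ((continuous_const.mul continuous_s : Continuous fun k => -c * s k)).rexp) ?_
  intro k hk
  have hsp := s_pos k
  rw [Real.norm_eq_abs, abs_of_nonneg (by positivity)]
  have h1 : Real.exp (-c * s k) ≤ Real.exp (-c * k) := by
    apply Real.exp_le_exp.2
    have := le_s hk.le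
    nlinarith
  have h2 := s_le hk.le
  have := Real.exp_pos (-c * k)
  nlinarith [Real.exp_pos (-c * s k)]

lemma int_exp_div {c : ℝ} (hc : 0 < c) :
    IntegrableOn (fun k : ℝ => Real.exp (-c * s k) / s k) (Ioi 0) := by
  refine integrable_of_bound hc (((continuous_const.mul continuous_s : Continuous fun k => -c * s k)).rexp.div continuous_s
    fun k => (s_pos k).ne') ?_
  intro k hk
  have hsp := s_pos k
  rw [Real.norm_eq_abs, abs_of_nonneg (by positivity)]
  have h1 : Real.exp (-c * s k) ≤ Real.exp (-c * k) := by
    apply Real.exp_le_exp.2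
    have := le_s hk.le
    nlinarith
  have hd : Real.exp (-c * s k) / s k ≤ Real.exp (-c * s k) := by
    rw [div_le_iff₀ hsp]
    nlinarith [one_le_s k, Real.exp_pos (-c * s k)]
  nlinarith [Real.exp_pos (-c * k), hk]

end BesselAux

open BesselAux Set Filter Metric

lemma ball_bound {x : ℝ} (hx : 0 < x) {y : ℝ} (hy : y ∈ Metric.ball x (x / 2)) :
    x / 2 ≤ y := by
  rw [Metric.mem_ball, Real.dist_eq, abs_lt] at hy
  linarith [hy.1]

lemma exp_bound {x y k : ℝ} (hx : 0 < x) (hy : x / 2 ≤ y) (hk : 0 < k) :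
    Real.exp (-y * s k) ≤ Real.exp (-(x / 2) * k) := by
  apply Real.exp_le_exp.2
  have h1 : k ≤ s k := le_s hk.le
  have h2 : x / 2 * k ≤ y * s k := by nlinarith [s_pos k]
  linarith

lemma hasDerivAt_K1 {x : ℝ} (hx : 0 < x) :
    HasDerivAt K1 (-∫ k in Ioi (0 : ℝ), s k * Real.exp (-x * s k)) x := by
  have key := hasDerivAt_integral_of_dominated_loc_of_deriv_le (μ := volume.restrict (Ioi 0))
    (F := fun y k => Real.exp (-y * s k))
    (F' := fun y k => -(s k * Real.exp (-y * s k)))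
    (bound := fun k => (k + 1) * Real.exp (-(x / 2) * k))
    (x₀ := x) (Metric.ball_mem_nhds x (half_pos hx))
    (Filter.Eventually.of_forall fun y =>
      (((continuous_const.mul continuous_s : Continuous fun k => -y * s k)).rexp).aestronglyMeasurable)
    (int_exp hx).integrable
    (((continuous_s.mul ((continuous_const.mul continuous_s : Continuous fun k => -x * s k)).rexp).neg).aestronglyMeasurable)
    ?_ (integrable_master (half_pos hx)).integrable ?_
  · have h2 : (∫ k in Ioi (0:ℝ), -(s k * Real.exp (-x * s k)))
        = -∫ k in Ioi (0:ℝ), s k * Real.exp (-x * s k) := integral_neg _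
    have := key.2
    rw [h2] at this
    exact this
  · rw [ae_restrict_iff' measurableSet_Ioi]
    filter_upwards with k hk y hy
    have hsp := s_pos k
    rw [norm_neg, Real.norm_eq_abs, abs_of_nonneg (by positivity)]
    have h1 := exp_bound hx (ball_bound hx hy) hk
    have h2 := s_le (le_of_lt hk)
    nlinarith [Real.exp_pos (-y * s k), Real.exp_pos (-(x/2) * k)]
  · filter_upwards with k y _
    have h : HasDerivAt (fun y : ℝ => -y * s k) (-1 * s k) y :=
      (hasDerivAt_id y).neg.mul_const (s k)
    have := h.exp
    exact this.congr_deriv (by ring)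

lemma hasDerivAt_K0 {x : ℝ} (hx : 0 < x) :
    HasDerivAt K0 (-(K1 x)) x := by
  have key := hasDerivAt_integral_of_dominated_loc_of_deriv_le (μ := volume.restrict (Ioi 0))
    (F := fun y k => Real.exp (-y * s k) / s k)
    (F' := fun y k => -Real.exp (-y * s k))
    (bound := fun k => (k + 1) * Real.exp (-(x / 2) * k))
    (x₀ := x) (Metric.ball_mem_nhds x (half_pos hx))
    (Filter.Eventually.of_forall fun y =>
      ((((continuous_const.mul continuous_s : Continuous fun k => -y * s k)).rexp.div continuous_s
        fun k => (s_pos k).ne')).aestronglyMeasurable)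
    (int_exp_div hx).integrable
    (((continuous_const.mul continuous_s : Continuous fun k => -x * s k)).rexp.neg.aestronglyMeasurable)
    ?_ (integrable_master (half_pos hx)).integrable ?_
  · have h2 : (∫ k in Ioi (0:ℝ), -Real.exp (-x * s k))
        = -∫ k in Ioi (0:ℝ), Real.exp (-x * s k) := integral_neg _
    have := key.2
    rw [h2] at this
    exact this
  · rw [ae_restrict_iff' measurableSet_Ioi]
    filter_upwards with k hk y hy
    rw [norm_neg, Real.norm_eq_abs, abs_of_nonneg (Real.exp_pos _).le]
    have hk0 : (0 : ℝ) < k := hk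
    have h1 := exp_bound hx (ball_bound hx hy) hk0
    nlinarith [Real.exp_pos (-(x/2) * k)]
  · filter_upwards with k y _
    have h : HasDerivAt (fun y : ℝ => -y * s k) (-1 * s k) y :=
      (hasDerivAt_id y).neg.mul_const (s k)
    have h2 := (h.exp).div_const (s k)
    refine h2.congr_deriv ?_
    symm
    rw [eq_div_iff (s_pos k).ne']
    ring

lemma ibp {x : ℝ} (hx : 0 < x) :
    (∫ k in Ioi (0 : ℝ), Real.exp (-x * s k))
      - x * (∫ k in Ioi (0 : ℝ), s k * Real.exp (-x * s k))
      + x * (∫ k in Ioi (0 : ℝ), Real.exp (-x * s k) / s k) = 0 := by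
  set g : ℝ → ℝ := fun k => k * Real.exp (-x * s k) with hg
  set f' : ℝ → ℝ := fun k =>
    Real.exp (-x * s k) - x * (s k * Real.exp (-x * s k))
      + x * (Real.exp (-x * s k) / s k) with hf'
  have hderiv : ∀ k : ℝ, HasDerivAt g (f' k) k := by
    intro k
    have h1 : HasDerivAt (fun k : ℝ => -x * s k) (-x * (k / s k)) k :=
      (hasDerivAt_s k).const_mul (-x)
    have h2 := (hasDerivAt_id k).mul h1.exp
    refine h2.congr_deriv ?_
    symm
    have hsp := (s_pos k).ne'
    have hs2 : s k ^ 2 = k ^ 2 + 1 := Real.sq_sqrt (by positivity)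
    rw [hf']
    simp only [id_eq]
    field_simp
    linear_combination (-x) * hs2
  have hint1 := int_exp hx
  have hint2 := int_s_exp hx
  have hint3 := int_exp_div hx
  have hA : Integrable (fun k => Real.exp (-x * s k) - x * (s k * Real.exp (-x * s k)))
      (volume.restrict (Ioi 0)) := by
    exact hint1.integrable.sub (hint2.integrable.const_mul x)
  have hB : Integrable (fun k => x * (Real.exp (-x * s k) / s k))
      (volume.restrict (Ioi 0)) := hint3.integrable.const_mul x
  have hintf' : IntegrableOn f' (Ioi 0) := by
    exact hA.add hB
  have htend : Tendsto g atTop (nhds 0) := by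
    have hup : Tendsto (fun k : ℝ => k * Real.exp (-x * k)) atTop (nhds 0) := by
      have := tendsto_rpow_mul_exp_neg_mul_atTop_nhds_zero 1 x hx
      refine this.congr' ?_
      filter_upwards with k
      rw [Real.rpow_one]
    refine tendsto_of_tendsto_of_tendsto_of_le_of_le' tendsto_const_nhds hup ?_ ?_
    · filter_upwards [eventually_ge_atTop (0 : ℝ)] with k hk
      positivity
    · filter_upwards [eventually_ge_atTop (0 : ℝ)] with k hk
      have h1 : Real.exp (-x * s k) ≤ Real.exp (-x * k) := by
        apply Real.exp_le_exp.2
        have := le_s hk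
        nlinarith
      exact mul_le_mul_of_nonneg_left h1 hk
  have hzero : (∫ k in Ioi (0 : ℝ), f' k) = 0 := by
    have := MeasureTheory.integral_Ioi_of_hasDerivAt_of_tendsto
      (f := g) (f' := f') (a := 0)
      (Continuous.continuousWithinAt (by
        exact continuous_id.mul ((continuous_const.mul continuous_s : Continuous fun k => -x * s k)).rexp))
      (fun k _ => hderiv k) hintf' htend
    simpa [hg] using this
  have hsplit : (∫ k in Ioi (0 : ℝ), f' k)
      = (∫ k in Ioi (0 : ℝ), Real.exp (-x * s k))
        - x * (∫ k in Ioi (0 : ℝ), s k * Real.exp (-x * s k))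
        + x * (∫ k in Ioi (0 : ℝ), Real.exp (-x * s k) / s k) := by
    rw [hf']
    rw [integral_add hA hB, integral_sub hint1.integrable (hint2.integrable.const_mul x),
      integral_const_mul, integral_const_mul]
  rw [← hsplit, hzero]

theorem besselK_derivatives (x : ℝ) (hx : 0 < x) :
    HasDerivAt K0 (-(K1 x)) x ∧ HasDerivAt (fun y => y * K1 y) (-(x * K0 x)) x := by
  refine ⟨hasDerivAt_K0 hx, ?_⟩
  have hK1 := hasDerivAt_K1 hx
  have hprod := (hasDerivAt_id x).mul hK1
  have hibp := ibp hx
  have hK1x : K1 x = ∫ k in Ioi (0 : ℝ), Real.exp (-x * s k) := rfl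
  have hK0x : K0 x = ∫ k in Ioi (0 : ℝ), Real.exp (-x * s k) / s k := rfl
  refine hprod.congr_deriv ?_
  rw [hK1x, hK0x] at *
  simp only [id_eq, one_mul]
  linarith
end

section
/- For every w with 0 < w < 1/2 one has w·K₁(w) < K₀(w), and for every w > (1 + √17)/8 one has w·K₁(w) > K₀(w). Consequently the second derivative of h̃(w) = w·K₁(w), which equals w·K₁(w) − K₀(w), is negative on (0, 1/2) and positive on ((1 + √17)/8, ∞). -/
open Real MeasureTheory Set Filter

noncomputable def S (k : ℝ) : ℝ := Real.sqrt (k ^ 2 + 1)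

lemma S_sq (k : ℝ) : S k ^ 2 = k ^ 2 + 1 := Real.sq_sqrt (by positivity)

lemma one_le_S (k : ℝ) : 1 ≤ S k := by
  rw [show (1:ℝ) = Real.sqrt 1 by simp [Real.sqrt_one]]
  exact Real.sqrt_le_sqrt (by nlinarith [sq_nonneg k])

lemma S_pos (k : ℝ) : 0 < S k := lt_of_lt_of_le one_pos (one_le_S k)

lemma S_ne (k : ℝ) : S k ≠ 0 := (S_pos k).ne'

lemma le_S {k : ℝ} (hk : 0 ≤ k) : k ≤ S k := by
  conv_lhs => rw [show k = Real.sqrt (k^2) by rw [Real.sqrt_sq hk]]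
  exact Real.sqrt_le_sqrt (by nlinarith)

lemma contS : Continuous S := by
  unfold S; fun_prop

lemma hasDerivAt_S (k : ℝ) : HasDerivAt S (k / S k) k := by
  have h1 : HasDerivAt (fun k : ℝ => k ^ 2 + 1) (2 * k) k := by
    simpa using ((hasDerivAt_pow 2 k).add_const 1)
  have := (Real.hasDerivAt_sqrt (x := k ^ 2 + 1) (by positivity)).comp k h1
  refine this.congr_deriv ?_
  have hS := S_pos k
  rw [show √(k ^ 2 + 1) = S k from rfl]
  field_simp

lemma pow_le_exp_aux {x : ℝ} (hx : 0 ≤ x) (n : ℕ) : x ^ n ≤ n.factorial * Real.exp x := by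
  have h := Real.pow_div_factorial_le_exp (x := x) hx n
  have h0 : (0:ℝ) < n.factorial := by positivity
  rw [div_le_iff₀ h0] at h
  linarith

lemma S_pow_exp_le {c : ℝ} (hc : 0 < c) (n : ℕ) {k : ℝ} (hk0 : 0 ≤ k) :
    S k ^ n * Real.exp (-c * S k) ≤ (n.factorial * (2/c)^n : ℝ) * Real.exp (-(c/2) * k) := by
  have hS1 : 1 ≤ S k := one_le_S k
  have hSpos := S_pos k
  have key : S k ^ n * Real.exp (-(c/2) * S k) ≤ n.factorial * (2/c)^n := by
    have h1 : ((c/2) * S k) ^ n ≤ n.factorial * Real.exp ((c/2) * S k) :=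
      pow_le_exp_aux (by positivity) n
    have h2 : S k ^ n = (2/c)^n * ((c/2) * S k)^n := by
      rw [mul_pow, ← mul_assoc, ← mul_pow]
      field_simp
      simp
    rw [h2]
    have h3 : (2/c)^n * ((c/2)*S k)^n * Real.exp (-(c/2)*S k)
        ≤ (2/c)^n * (n.factorial * Real.exp ((c/2)*S k)) * Real.exp (-(c/2)*S k) := by
      apply mul_le_mul_of_nonneg_right _ (Real.exp_nonneg _)
      exact mul_le_mul_of_nonneg_left h1 (by positivity)
    refine h3.trans ?_
    rw [mul_assoc, mul_assoc, ← Real.exp_add,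
      show c / 2 * S k + -(c/2) * S k = 0 by ring, Real.exp_zero, mul_one]
    ring_nf
    try rfl
  calc S k ^ n * Real.exp (-c * S k)
      = (S k ^ n * Real.exp (-(c/2) * S k)) * Real.exp (-(c/2) * S k) := by
        rw [mul_assoc, ← Real.exp_add]; ring_nf
    _ ≤ (n.factorial * (2/c)^n) * Real.exp (-(c/2) * S k) := by
        apply mul_le_mul_of_nonneg_right _ (Real.exp_nonneg _)
        · exact key.trans_eq (by ring)
    _ ≤ (n.factorial * (2/c)^n) * Real.exp (-(c/2) * k) := by
        apply mul_le_mul_of_nonneg_left _ (by positivity)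
        apply Real.exp_le_exp.mpr
        have := le_S hk0
        nlinarith

/-- master integrability lemma -/
lemma integrableOn_S_pow_exp {c : ℝ} (hc : 0 < c) (n : ℕ) :
    IntegrableOn (fun k => S k ^ n * Real.exp (-c * S k)) (Ioi (0:ℝ)) := by
  have hint : IntegrableOn (fun k => (n.factorial * (2/c)^n : ℝ) * Real.exp (-(c/2) * k)) (Ioi (0:ℝ)) :=
    (exp_neg_integrableOn_Ioi 0 (by positivity : (0:ℝ) < c/2)).const_mul _
  refine hint.mono' ?_ ?_
  · exact (((contS.pow n).mul (Real.continuous_exp.comp (continuous_const.mul contS)))).aestronglyMeasurable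
  · rw [ae_restrict_iff' measurableSet_Ioi]
    filter_upwards with k hk
    have hSpos := S_pos k
    rw [Real.norm_eq_abs, abs_of_nonneg (by positivity)]
    exact S_pow_exp_le hc n (le_of_lt hk)

lemma K0_eq (x : ℝ) : K0 x = ∫ k in Ioi (0:ℝ), Real.exp (-x * S k) / S k := rfl

lemma K1_eq (x : ℝ) : K1 x = ∫ k in Ioi (0:ℝ), Real.exp (-x * S k) := rfl

lemma integrable_of_bound {c : ℝ} (hc : 0 < c) {f : ℝ → ℝ} (hm : Continuous f)
    (hb : ∀ k, 0 ≤ k → |f k| ≤ S k ^ 2 * Real.exp (-c * S k)) :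
    IntegrableOn f (Ioi (0:ℝ)) := by
  refine (integrableOn_S_pow_exp hc 2).mono' hm.aestronglyMeasurable ?_
  rw [ae_restrict_iff' measurableSet_Ioi]
  filter_upwards with k hk
  exact hb k (le_of_lt hk)

lemma cont_exp_S (x : ℝ) : Continuous (fun k => Real.exp (-x * S k)) :=
  Real.continuous_exp.comp (continuous_const.mul contS)

lemma one_le_S_sq (k : ℝ) : 1 ≤ S k ^ 2 := by nlinarith [one_le_S k]

lemma exp_S_le (x : ℝ) (k : ℝ) : Real.exp (-x * S k) ≤ S k ^ 2 * Real.exp (-x * S k) :=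
  le_mul_of_one_le_left (Real.exp_nonneg _) (one_le_S_sq k)

lemma int_exp {x : ℝ} (hx : 0 < x) :
    IntegrableOn (fun k => Real.exp (-x * S k)) (Ioi (0:ℝ)) := by
  refine integrable_of_bound hx (cont_exp_S x) (fun k _ => ?_)
  rw [abs_of_nonneg (Real.exp_nonneg _)]; exact exp_S_le x k

lemma int_exp_div {x : ℝ} (hx : 0 < x) :
    IntegrableOn (fun k => Real.exp (-x * S k) / S k) (Ioi (0:ℝ)) := by
  refine integrable_of_bound hx ((cont_exp_S x).div contS (fun k => S_ne k)) (fun k _ => ?_)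
  have h1 := one_le_S k
  have h2 := Real.exp_pos (-x * S k)
  rw [abs_of_nonneg (by positivity)]
  calc Real.exp (-x * S k) / S k ≤ Real.exp (-x * S k) := by
        rw [div_le_iff₀ (S_pos k)]; nlinarith
    _ ≤ _ := exp_S_le x k

lemma int_S_exp {x : ℝ} (hx : 0 < x) :
    IntegrableOn (fun k => S k * Real.exp (-x * S k)) (Ioi (0:ℝ)) := by
  refine integrable_of_bound hx (contS.mul (cont_exp_S x)) (fun k _ => ?_)
  have h1 := one_le_S k
  have h2 := Real.exp_pos (-x * S k)
  rw [abs_of_nonneg (by positivity)]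
  exact mul_le_mul_of_nonneg_right (by nlinarith) h2.le

lemma int_S2_exp {x : ℝ} (hx : 0 < x) :
    IntegrableOn (fun k => S k ^ 2 * Real.exp (-x * S k)) (Ioi (0:ℝ)) := by
  simpa using integrableOn_S_pow_exp hx 2

lemma int_k2_exp {x : ℝ} (hx : 0 < x) :
    IntegrableOn (fun k => k ^ 2 * Real.exp (-x * S k)) (Ioi (0:ℝ)) := by
  refine integrable_of_bound hx ((continuous_pow 2).mul (cont_exp_S x)) (fun k hk => ?_)
  have h2 := Real.exp_pos (-x * S k)
  have h3 : k^2 ≤ S k ^ 2 := by rw [S_sq]; linarith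
  rw [abs_of_nonneg (by positivity)]
  nlinarith

lemma int_Q {x : ℝ} (hx : 0 < x) :
    IntegrableOn (fun k => Real.exp (-x * S k) / (S k * (S k + 1))) (Ioi (0:ℝ)) := by
  have hne : ∀ k, S k * (S k + 1) ≠ 0 := fun k => by
    have := S_pos k; positivity
  refine integrable_of_bound hx ((cont_exp_S x).div (contS.mul (contS.add continuous_const)) hne)
    (fun k _ => ?_)
  have h1 := one_le_S k
  have h2 := Real.exp_pos (-x * S k)
  have hd : (0:ℝ) < S k * (S k + 1) := by positivity
  rw [abs_of_nonneg (by positivity)]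
  calc Real.exp (-x * S k) / (S k * (S k + 1)) ≤ Real.exp (-x * S k) := by
        rw [div_le_iff₀ hd]
        exact le_mul_of_one_le_right h2.le (by nlinarith)
    _ ≤ _ := exp_S_le x k

lemma hasDerivAt_exp_S (x k : ℝ) :
    HasDerivAt (fun k => Real.exp (-x * S k)) (-x * (k / S k) * Real.exp (-x * S k)) k := by
  have h1 : HasDerivAt (fun k => -x * S k) (-x * (k / S k)) k := (hasDerivAt_S k).const_mul (-x)
  simpa [mul_comm] using h1.exp

/-- Tendsto of exp(-x k) at top -/
lemma tendsto_exp_neg_mul (x : ℝ) (hx : 0 < x) :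
    Tendsto (fun k : ℝ => Real.exp (-x * k)) atTop (nhds 0) := by
  have : Tendsto (fun k : ℝ => -x * k) atTop atBot :=
    tendsto_id.const_mul_atTop_of_neg (neg_lt_zero.mpr hx)
  exact Real.tendsto_exp_atBot.comp this

/-- First integration by parts identity:
`∫ e^{-xS}/(S(S+1)) = x (K1 x - K0 x)` -/
lemma ibp1 {x : ℝ} (hx : 0 < x) :
    ∫ k in Ioi (0:ℝ), Real.exp (-x * S k) / (S k * (S k + 1))
      = x * (K1 x - K0 x) := by
  set F : ℝ → ℝ := fun k => k / (S k + 1) * Real.exp (-x * S k) with hF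
  have hder : ∀ k, HasDerivAt F
      (Real.exp (-x * S k) / (S k * (S k + 1))
        - x * (Real.exp (-x * S k) - Real.exp (-x * S k) / S k)) k := by
    intro k
    have h1 : HasDerivAt (fun k => k / (S k + 1)) (1 / (S k * (S k + 1))) k := by
      have hd : HasDerivAt (fun k => S k + 1) (k / S k) k := (hasDerivAt_S k).add_const 1
      have hne : S k + 1 ≠ 0 := by have := S_pos k; positivity
      have := (hasDerivAt_id k).div hd hne
      refine this.congr_deriv ?_
      have hS := S_pos k
      have hsq := S_sq k
      field_simp
      ring_nf
      simp only [id]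
      linear_combination hsq
    have := h1.mul (hasDerivAt_exp_S x k)
    refine this.congr_deriv ?_
    have hS := S_pos k
    have hS1 : S k + 1 ≠ 0 := by positivity
    have hsq := S_sq k
    field_simp
    ring_nf
    linear_combination x * hsq
  have hg1int : IntegrableOn (fun k => x * (Real.exp (-x * S k) - Real.exp (-x * S k) / S k)) (Ioi (0:ℝ)) :=
    ((int_exp hx).sub (int_exp_div hx)).const_mul x
  have hint : IntegrableOn (fun k => Real.exp (-x * S k) / (S k * (S k + 1))
      - x * (Real.exp (-x * S k) - Real.exp (-x * S k) / S k)) (Ioi (0:ℝ)) :=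
    (int_Q hx).sub hg1int
  have htend : Tendsto F atTop (nhds 0) := by
    apply squeeze_zero_norm' _ (tendsto_exp_neg_mul x hx)
    filter_upwards [eventually_ge_atTop (0:ℝ)] with k hk
    have hS := S_pos k
    have hkS := le_S hk
    have h1 : k / (S k + 1) ≤ 1 := by
      rw [div_le_one (by positivity)]; linarith
    have h2 : Real.exp (-x * S k) ≤ Real.exp (-x * k) := by
      apply Real.exp_le_exp.mpr; nlinarith
    have h3 : 0 ≤ k / (S k + 1) := by positivity
    rw [hF, Real.norm_eq_abs, abs_of_nonneg (by positivity)]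
    calc k / (S k + 1) * Real.exp (-x * S k) ≤ 1 * Real.exp (-x * S k) :=
          mul_le_mul_of_nonneg_right h1 (Real.exp_nonneg _)
      _ = Real.exp (-x * S k) := one_mul _
      _ ≤ Real.exp (-x * k) := h2
  have hF0 : F 0 = 0 := by simp [hF]
  have key := integral_Ioi_of_hasDerivAt_of_tendsto' (fun k _ => hder k) hint htend
  rw [hF0, sub_zero] at key
  rw [MeasureTheory.integral_sub (int_Q hx) hg1int] at key
  have h5 : ∫ k in Ioi (0:ℝ), x * (Real.exp (-x * S k) - Real.exp (-x * S k) / S k)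
      = x * (K1 x - K0 x) := by
    rw [MeasureTheory.integral_const_mul, MeasureTheory.integral_sub (int_exp hx) (int_exp_div hx),
      K1_eq, K0_eq]
  rw [h5] at key
  linarith

/-- Second integration by parts identity: `x ∫ k² e^{-xS} = 2 ∫ S e^{-xS} - K0 x` -/
lemma ibp2 {x : ℝ} (hx : 0 < x) :
    x * ∫ k in Ioi (0:ℝ), k ^ 2 * Real.exp (-x * S k)
      = 2 * (∫ k in Ioi (0:ℝ), S k * Real.exp (-x * S k)) - K0 x := by
  set G : ℝ → ℝ := fun k => k * S k * Real.exp (-x * S k) with hG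
  have hder : ∀ k, HasDerivAt G
      ((2 * (S k * Real.exp (-x * S k)) - Real.exp (-x * S k) / S k)
        - x * (k ^ 2 * Real.exp (-x * S k))) k := by
    intro k
    have h1 : HasDerivAt (fun k => k * S k) (1 * S k + k * (k / S k)) k :=
      (hasDerivAt_id k).mul (hasDerivAt_S k)
    have h2 := h1.mul (hasDerivAt_exp_S x k)
    refine h2.congr_deriv ?_
    have hS := S_pos k
    have hsq := S_sq k
    set E := Real.exp (-x * S k) with hE
    field_simp
    linear_combination (-E) * hsq
  have hf2int : IntegrableOn (fun k => 2 * (S k * Real.exp (-x * S k)) - Real.exp (-x * S k) / S k) (Ioi (0:ℝ)) :=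
    ((int_S_exp hx).const_mul 2).sub (int_exp_div hx)
  have hg2int : IntegrableOn (fun k => x * (k ^ 2 * Real.exp (-x * S k))) (Ioi (0:ℝ)) :=
    (int_k2_exp hx).const_mul x
  have hint : IntegrableOn (fun k => (2 * (S k * Real.exp (-x * S k)) - Real.exp (-x * S k) / S k)
      - x * (k ^ 2 * Real.exp (-x * S k))) (Ioi (0:ℝ)) := hf2int.sub hg2int
  have htend : Tendsto G atTop (nhds 0) := by
    have hlim : Tendsto (fun k : ℝ => ((Nat.factorial 2 : ℝ) * (2/x)^2) * Real.exp (-(x/2) * k)) atTop (nhds 0) := by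
      simpa using (tendsto_exp_neg_mul (x/2) (by positivity)).const_mul ((Nat.factorial 2 : ℝ) * (2/x)^2)
    apply squeeze_zero_norm' _ hlim
    filter_upwards [eventually_ge_atTop (0:ℝ)] with k hk
    have hS := S_pos k
    have hkS := le_S hk
    have key : S k ^ 2 * Real.exp (-x * S k) ≤ (Nat.factorial 2 : ℝ) * (2/x)^2 * Real.exp (-(x/2) * k) :=
      S_pow_exp_le hx 2 hk
    rw [hG, Real.norm_eq_abs, abs_of_nonneg (by positivity)]
    calc k * S k * Real.exp (-x * S k) ≤ S k * S k * Real.exp (-x * S k) := by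
          apply mul_le_mul_of_nonneg_right _ (Real.exp_nonneg _)
          exact mul_le_mul_of_nonneg_right hkS (le_of_lt hS)
      _ = S k ^ 2 * Real.exp (-x * S k) := by ring
      _ ≤ _ := key
  have hG0 : G 0 = 0 := by simp [hG]
  have key := integral_Ioi_of_hasDerivAt_of_tendsto' (fun k _ => hder k) hint htend
  rw [hG0, sub_zero] at key
  rw [MeasureTheory.integral_sub hf2int hg2int] at key
  rw [MeasureTheory.integral_sub ((int_S_exp hx).const_mul 2) (int_exp_div hx),
    MeasureTheory.integral_const_mul, MeasureTheory.integral_const_mul] at key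
  rw [K0_eq]
  linarith [key]


noncomputable def A (n : ℕ) (x : ℝ) : ℝ := ∫ k in Ioi (0:ℝ), S k ^ n * Real.exp (-x * S k)

lemma hasDerivAt_A (n : ℕ) {x : ℝ} (hx : 0 < x) :
    HasDerivAt (A n) (-(A (n+1) x)) x := by
  have key := hasDerivAt_integral_of_dominated_loc_of_deriv_le
    (μ := volume.restrict (Ioi (0:ℝ)))
    (F := fun y k => S k ^ n * Real.exp (-y * S k))
    (F' := fun y k => -(S k ^ (n+1) * Real.exp (-y * S k)))
    (x₀ := x) (bound := fun k => S k ^ (n+1) * Real.exp (-(x/2) * S k))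
    (Metric.ball_mem_nhds x (half_pos hx))
    (Filter.Eventually.of_forall fun y =>
      ((contS.pow n).mul (cont_exp_S y)).aestronglyMeasurable)
    (integrableOn_S_pow_exp hx n)
    (((contS.pow (n+1)).mul (cont_exp_S x)).neg.aestronglyMeasurable)
    ?_ (integrableOn_S_pow_exp (half_pos hx) (n+1)) ?_
  · have h2 : (∫ k in Ioi (0:ℝ), -(S k ^ (n+1) * Real.exp (-x * S k))) = -(A (n+1) x) := by
      rw [MeasureTheory.integral_neg]; rfl
    have := key.2
    rw [h2] at this
    exact this
  · refine Filter.Eventually.of_forall fun k => fun y hy => ?_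
    have hy2 : x/2 < y := by
      rw [Metric.mem_ball, Real.dist_eq, abs_lt] at hy
      linarith [hy.1]
    have hSpos := S_pos k
    rw [norm_neg, Real.norm_eq_abs, abs_of_nonneg (by positivity)]
    apply mul_le_mul_of_nonneg_left _ (by positivity)
    apply Real.exp_le_exp.mpr
    nlinarith
  · refine Filter.Eventually.of_forall fun k => fun y _ => ?_
    have h1 : HasDerivAt (fun y : ℝ => -y * S k) (-1 * S k) y :=
      (hasDerivAt_id y).neg.mul_const (S k)
    have h2 := h1.exp
    have h3 := h2.const_mul (S k ^ n)
    refine h3.congr_deriv ?_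
    ring

lemma A0_eq_K1 : A 0 = K1 := by
  funext y
  rw [K1_eq]; unfold A
  simp

lemma hasDerivAt_K1_s10 {x : ℝ} (hx : 0 < x) : HasDerivAt K1 (-(A 1 x)) x := by
  have := hasDerivAt_A 0 hx
  rwa [A0_eq_K1] at this

lemma A2_identity {x : ℝ} (hx : 0 < x) :
    x * A 2 x - 2 * A 1 x = x * K1 x - K0 x := by
  have hsplit : A 2 x = (∫ k in Ioi (0:ℝ), k ^ 2 * Real.exp (-x * S k)) + K1 x := by
    unfold A
    rw [K1_eq, ← MeasureTheory.integral_add (int_k2_exp hx) (int_exp hx)]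
    apply MeasureTheory.setIntegral_congr_fun measurableSet_Ioi
    intro k _
    have := S_sq k
    simp only
    nlinarith [Real.exp_pos (-x * S k)]
  have h2 := ibp2 hx
  have hA1 : A 1 x = ∫ k in Ioi (0:ℝ), S k * Real.exp (-x * S k) := by
    unfold A; simp
  rw [hsplit, hA1]
  nlinarith [h2]

lemma deriv2_eq {x : ℝ} (hx : 0 < x) :
    deriv (deriv (fun w => w * K1 w)) x = x * K1 x - K0 x := by
  have hev : deriv (fun w => w * K1 w) =ᶠ[nhds x] fun y => K1 y - y * A 1 y := by
    filter_upwards [isOpen_Ioi.mem_nhds hx] with y hy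
    have hd : HasDerivAt (fun w => w * K1 w) (1 * K1 y + y * -(A 1 y)) y :=
      (hasDerivAt_id y).mul (hasDerivAt_K1_s10 hy)
    rw [hd.deriv]; ring
  rw [hev.deriv_eq]
  have hd2 : HasDerivAt (fun y => K1 y - y * A 1 y)
      (-(A 1 x) - (1 * A 1 x + x * -(A 2 x))) x :=
    (hasDerivAt_K1_s10 hx).sub ((hasDerivAt_id x).mul (hasDerivAt_A 1 hx))
  rw [hd2.deriv, ← A2_identity hx]
  ring

lemma int_pos_of_pos {f : ℝ → ℝ} (hfi : IntegrableOn f (Ioi (0:ℝ)))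
    (hpos : ∀ k ∈ Ioi (0:ℝ), 0 < f k) : 0 < ∫ k in Ioi (0:ℝ), f k := by
  rw [MeasureTheory.setIntegral_pos_iff_support_of_nonneg_ae _ hfi]
  · refine lt_of_lt_of_le ?_ (measure_mono (fun k hk => ⟨(hpos k hk).ne', hk⟩))
    simp [Real.volume_Ioi]
  · rw [Filter.EventuallyLE, MeasureTheory.ae_restrict_iff' measurableSet_Ioi]
    filter_upwards with k hk
    exact (hpos k hk).le

lemma one_lt_S {k : ℝ} (hk : 0 < k) : 1 < S k := by
  nlinarith [S_sq k, S_pos k]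

lemma K0_pos {x : ℝ} (hx : 0 < x) : 0 < K0 x := by
  rw [K0_eq]
  refine int_pos_of_pos (int_exp_div hx) (fun k _ => ?_)
  have := S_pos k
  positivity

/-- Strict upper bound: `x (K1 x - K0 x) < K0 x / 2`. -/
lemma upper_bound {x : ℝ} (hx : 0 < x) : x * (K1 x - K0 x) < K0 x / 2 := by
  have hQint := int_Q hx
  have hfint : IntegrableOn (fun k => Real.exp (-x * S k) / S k / 2) (Ioi (0:ℝ)) :=
    (int_exp_div hx).div_const 2
  have hpos : 0 < ∫ k in Ioi (0:ℝ),
      (Real.exp (-x * S k) / S k / 2 - Real.exp (-x * S k) / (S k * (S k + 1))) := by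
    refine int_pos_of_pos (hfint.sub hQint) (fun k hk => ?_)
    have hS := one_lt_S hk
    have hSpos := S_pos k
    have hE := Real.exp_pos (-x * S k)
    have key : Real.exp (-x * S k) / S k / 2 - Real.exp (-x * S k) / (S k * (S k + 1))
        = (S k - 1) * Real.exp (-x * S k) / (2 * S k * (S k + 1)) := by
      field_simp
      ring
    rw [key]
    apply div_pos (mul_pos (by linarith) hE) (by positivity)
  rw [MeasureTheory.integral_sub hfint hQint, MeasureTheory.integral_div, ibp1 hx, ← K0_eq] at hpos
  linarith

/-- Strict lower bound: `(3 K0 x - K1 x)/4 < x (K1 x - K0 x)`. -/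
lemma lower_bound {x : ℝ} (hx : 0 < x) :
    (3 * K0 x - K1 x) / 4 < x * (K1 x - K0 x) := by
  have hQint := int_Q hx
  have hgint : IntegrableOn (fun k => 3/4 * (Real.exp (-x * S k) / S k) - 1/4 * Real.exp (-x * S k))
      (Ioi (0:ℝ)) := ((int_exp_div hx).const_mul (3/4)).sub ((int_exp hx).const_mul (1/4))
  have hpos : 0 < ∫ k in Ioi (0:ℝ),
      (Real.exp (-x * S k) / (S k * (S k + 1))
        - (3/4 * (Real.exp (-x * S k) / S k) - 1/4 * Real.exp (-x * S k))) := by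
    refine int_pos_of_pos (hQint.sub hgint) (fun k hk => ?_)
    have hS := one_lt_S hk
    have hSpos := S_pos k
    have hE := Real.exp_pos (-x * S k)
    have key : Real.exp (-x * S k) / (S k * (S k + 1))
        - (3/4 * (Real.exp (-x * S k) / S k) - 1/4 * Real.exp (-x * S k))
        = (S k - 1)^2 * Real.exp (-x * S k) / (4 * S k * (S k + 1)) := by
      field_simp
      ring
    rw [key]
    apply div_pos (mul_pos (pow_pos (by linarith) 2) hE) (by positivity)
  rw [MeasureTheory.integral_sub hQint hgint,
    MeasureTheory.integral_sub ((int_exp_div hx).const_mul (3/4)) ((int_exp hx).const_mul (1/4)),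
    MeasureTheory.integral_const_mul, MeasureTheory.integral_const_mul,
    ibp1 hx, ← K0_eq, ← K1_eq] at hpos
  linarith

lemma claim1 {w : ℝ} (hw : 0 < w) (hw2 : w < 1/2) : w * K1 w < K0 w := by
  have h1 := upper_bound hw
  have h2 := K0_pos hw
  nlinarith [mul_pos (show (0:ℝ) < 1/2 - w by linarith) h2]

lemma claim2 {w : ℝ} (hw : (1 + Real.sqrt 17) / 8 < w) : K0 w < w * K1 w := by
  have h17 : Real.sqrt 17 ^ 2 = 17 := Real.sq_sqrt (by norm_num)
  have hs : 0 ≤ Real.sqrt 17 := Real.sqrt_nonneg 17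
  have hw0 : 0 < w := by nlinarith
  have hq : 4 * w^2 > w + 1 := by nlinarith [sq_nonneg (8*w - 1 - Real.sqrt 17)]
  have h1 := lower_bound hw0
  have h2 := K0_pos hw0
  -- (4w+1) K1 > (4w+3) K0
  have h3 : (4*w + 1) * K1 w > (4*w + 3) * K0 w := by nlinarith
  nlinarith [mul_pos hw0 h2, mul_pos (show (0:ℝ) < 4*w^2 - w - 1 by linarith) h2]

theorem htilde_second_derivative_sign :
    (∀ w : ℝ, 0 < w → w < 1 / 2 → w * K1 w < K0 w) ∧
    (∀ w : ℝ, (1 + Real.sqrt 17) / 8 < w → K0 w < w * K1 w) ∧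
    (∀ w : ℝ, 0 < w → deriv (deriv (fun w => w * K1 w)) w = w * K1 w - K0 w) ∧
    (∀ w : ℝ, 0 < w → w < 1 / 2 → deriv (deriv (fun w => w * K1 w)) w < 0) ∧
    (∀ w : ℝ, (1 + Real.sqrt 17) / 8 < w → 0 < deriv (deriv (fun w => w * K1 w)) w) := by
  refine ⟨fun w hw hw2 => claim1 hw (by linarith), fun w hw => claim2 hw,
    fun w hw => deriv2_eq hw, fun w hw hw2 => ?_, fun w hw => ?_⟩
  · rw [deriv2_eq hw]
    have := claim1 hw (by linarith : w < 1/2)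
    linarith
  · have hw0 : 0 < w := by
      have hs : 0 ≤ Real.sqrt 17 := Real.sqrt_nonneg 17
      nlinarith
    rw [deriv2_eq hw0]
    have := claim2 hw
    linarith
end

section
/- For every s ≥ 0, the integral I(s) = ∫_s^∞ K₁(y)·√(y² − s²) dy equals (π/2)·e^{−s}; moreover, for every s > 0 one also has I(s) = s · ∫_s^∞ K₁(y) / √(y² − s²) dy. -/
open Real MeasureTheory

open Set
open scoped ENNReal
set_option maxHeartbeats 1000000

theorem K1_nonneg (x : ℝ) : 0 ≤ K1 x := integral_nonneg fun k => (Real.exp_pos _).le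

theorem L1deriv {A B : ℝ} (hA : 0 < A) (hB : 0 < B) (x : ℝ) :
    HasDerivAt (fun x => (Real.sqrt (A * B))⁻¹ * arctan (Real.sqrt (A / B) * x))
      ((A * x ^ 2 + B)⁻¹) x := by
  have h1 : HasDerivAt (fun x : ℝ => Real.sqrt (A / B) * x) (Real.sqrt (A / B)) x :=
    by simpa using (hasDerivAt_id x).const_mul (Real.sqrt (A / B))
  have h2 := (Real.hasDerivAt_arctan (Real.sqrt (A / B) * x)).comp x h1
  have h3 := h2.const_mul (Real.sqrt (A * B))⁻¹
  refine h3.congr_deriv (Eq.symm ?_)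
  have hsA := Real.sq_sqrt hA.le
  have hsB := Real.sq_sqrt hB.le
  have hrB : 0 < Real.sqrt B := Real.sqrt_pos.2 hB
  have hrA : 0 < Real.sqrt A := Real.sqrt_pos.2 hA
  rw [Real.sqrt_mul hA.le, Real.sqrt_div hA.le, mul_pow, div_pow, hsA, hsB]
  have hden : 0 < 1 + A / B * x ^ 2 := by positivity
  field_simp
  linear_combination (B + A * x ^ 2) * hsB

theorem L1 {A B : ℝ} (hA : 0 < A) (hB : 0 < B) :
    ∫ x in Ioi (0:ℝ), (A * x ^ 2 + B)⁻¹ = π / (2 * Real.sqrt (A * B)) := by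
  have hAB : 0 < Real.sqrt (A * B) := Real.sqrt_pos.2 (mul_pos hA hB)
  have hc : 0 < Real.sqrt (A / B) := Real.sqrt_pos.2 (div_pos hA hB)
  have hlim : Filter.Tendsto (fun x => (Real.sqrt (A * B))⁻¹ * arctan (Real.sqrt (A / B) * x))
      Filter.atTop (nhds ((Real.sqrt (A * B))⁻¹ * (π / 2))) := by
    apply Filter.Tendsto.const_mul
    have := Real.tendsto_arctan_atTop.mono_right nhdsWithin_le_nhds
    exact this.comp (Filter.tendsto_id.const_mul_atTop hc)
  have := integral_Ioi_of_hasDerivAt_of_nonneg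
    ((L1deriv hA hB 0).continuousAt.continuousWithinAt)
    (fun x _ => L1deriv hA hB x) (fun x _ => by positivity) hlim
  rw [this]
  rw [mul_zero, Real.arctan_zero, mul_zero, sub_zero]
  rw [inv_mul_eq_div, div_eq_div_iff hAB.ne' (by positivity)]
  ring

-- θ-integral core: for r > 0, s > 0
theorem theta_core {r s : ℝ} (hr : 0 < r) (hs : 0 < s) :
    ∫ θ in Ioo (0:ℝ) (π/2), (r ^ 2 * Real.cos θ ^ 2 + s ^ 2)⁻¹
      = π / (2 * s * Real.sqrt (r ^ 2 + s ^ 2)) := by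
  have himg : arctan '' Ioi (0:ℝ) = Ioo (0:ℝ) (π/2) := by
    ext θ; constructor
    · rintro ⟨x, hx, rfl⟩
      exact ⟨by rw [← Real.arctan_zero]; exact Real.arctan_strictMono hx, Real.arctan_lt_pi_div_two x⟩
    · rintro ⟨h1, h2⟩
      exact ⟨Real.tan θ, Real.tan_pos_of_pos_of_lt_pi_div_two h1 h2,
        Real.arctan_tan (by linarith [Real.pi_pos]) h2⟩
  have hderiv : ∀ x ∈ Ioi (0:ℝ),
      HasDerivWithinAt arctan ((1 + x ^ 2)⁻¹) (Ioi 0) x := fun x _ => by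
    simpa [one_div] using (Real.hasDerivAt_arctan x).hasDerivWithinAt
  rw [← himg, integral_image_eq_integral_abs_deriv_smul measurableSet_Ioi hderiv
    Real.arctan_injective.injOn]
  have : ∀ x ∈ Ioi (0:ℝ), |(1 + x ^ 2)⁻¹| • (r ^ 2 * Real.cos (arctan x) ^ 2 + s ^ 2)⁻¹
      = (s ^ 2 * x ^ 2 + (r ^ 2 + s ^ 2))⁻¹ := by
    intro x _
    have h1 : (0:ℝ) < 1 + x ^ 2 := by positivity
    rw [abs_of_pos (by positivity), Real.cos_arctan, smul_eq_mul]
    rw [div_pow, one_pow, Real.sq_sqrt h1.le]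
    rw [← mul_inv]
    congr 1
    field_simp
    ring
  rw [setIntegral_congr_fun measurableSet_Ioi this, L1 (by positivity) (by positivity)]
  have h2 : Real.sqrt (s ^ 2 * (r ^ 2 + s ^ 2)) = s * Real.sqrt (r ^ 2 + s ^ 2) := by
    rw [Real.sqrt_mul (by positivity), Real.sqrt_sq hs.le]
  rw [h2]; ring_nf
open scoped ENNReal

theorem rho_deriv {s : ℝ} {r : ℝ} (hr : 0 < r) :
    HasDerivAt (fun r => Real.sqrt (s ^ 2 + r ^ 2)) (r / Real.sqrt (s ^ 2 + r ^ 2)) r := by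
  have h0 : (0:ℝ) < s ^ 2 + r ^ 2 := by positivity
  have h1 : HasDerivAt (fun r : ℝ => s ^ 2 + r ^ 2) (2 * r) r := by
    simpa using ((hasDerivAt_pow 2 r).const_add (s ^ 2))
  have h2 := (Real.hasDerivAt_sqrt h0.ne').comp r h1
  refine h2.congr_deriv (Eq.symm ?_)
  field_simp

theorem rho_tendsto {s : ℝ} :
    Filter.Tendsto (fun r : ℝ => Real.sqrt (s ^ 2 + r ^ 2)) Filter.atTop Filter.atTop := by
  apply Filter.tendsto_atTop_mono' _ _ Filter.tendsto_id
  filter_upwards [Filter.eventually_ge_atTop (0:ℝ)] with r hr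
  calc r = Real.sqrt (r ^ 2) := (Real.sqrt_sq hr).symm
  _ ≤ Real.sqrt (s ^ 2 + r ^ 2) := Real.sqrt_le_sqrt (by nlinarith)

theorem rho_ge {s r : ℝ} (hs : 0 ≤ s) : s ≤ Real.sqrt (s ^ 2 + r ^ 2) := by
  calc s = Real.sqrt (s ^ 2) := (Real.sqrt_sq hs).symm
  _ ≤ Real.sqrt (s ^ 2 + r ^ 2) := Real.sqrt_le_sqrt (by nlinarith [sq_nonneg r])

-- case A antiderivative
theorem FA_deriv {s : ℝ} {r : ℝ} (hr : 0 < r) :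
    HasDerivAt (fun r => -((Real.sqrt (s ^ 2 + r ^ 2) + 1 - s) *
        Real.exp (-Real.sqrt (s ^ 2 + r ^ 2))))
      ((r - r * s / Real.sqrt (s ^ 2 + r ^ 2)) * Real.exp (-Real.sqrt (s ^ 2 + r ^ 2))) r := by
  have h0 : (0:ℝ) < s ^ 2 + r ^ 2 := by positivity
  have hρ : 0 < Real.sqrt (s ^ 2 + r ^ 2) := Real.sqrt_pos.2 h0
  have h1 := rho_deriv (s := s) hr
  have h2 : HasDerivAt (fun r => Real.sqrt (s ^ 2 + r ^ 2) + 1 - s)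
      (r / Real.sqrt (s ^ 2 + r ^ 2)) r := by
    simpa using (h1.add_const 1).sub_const s
  have h3 : HasDerivAt (fun r => Real.exp (-Real.sqrt (s ^ 2 + r ^ 2)))
      (-(r / Real.sqrt (s ^ 2 + r ^ 2)) * Real.exp (-Real.sqrt (s ^ 2 + r ^ 2))) r := by
    have := (h1.neg).exp
    simpa [mul_comm] using this
  have h4 := (h2.mul h3).neg
  refine h4.congr_deriv (Eq.symm ?_)
  field_simp
  ring

theorem integralA {s : ℝ} (hs : 0 ≤ s) :
    (∫ r in Ioi (0:ℝ),
        (r - r * s / Real.sqrt (s ^ 2 + r ^ 2)) * Real.exp (-Real.sqrt (s ^ 2 + r ^ 2)))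
      = Real.exp (-s) ∧
    IntegrableOn (fun r =>
        (r - r * s / Real.sqrt (s ^ 2 + r ^ 2)) * Real.exp (-Real.sqrt (s ^ 2 + r ^ 2)))
      (Ioi (0:ℝ)) := by
  have hcontF : Continuous (fun r : ℝ => -((Real.sqrt (s ^ 2 + r ^ 2) + 1 - s) *
      Real.exp (-Real.sqrt (s ^ 2 + r ^ 2)))) := by fun_prop
  have hnonneg : ∀ r ∈ Ioi (0:ℝ), 0 ≤
      (r - r * s / Real.sqrt (s ^ 2 + r ^ 2)) * Real.exp (-Real.sqrt (s ^ 2 + r ^ 2)) := by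
    intro r hr
    have hr0 : 0 < r := hr
    have hρ : 0 < Real.sqrt (s ^ 2 + r ^ 2) := Real.sqrt_pos.2 (by positivity)
    have h5 : s ≤ Real.sqrt (s ^ 2 + r ^ 2) := rho_ge hs
    have : 0 ≤ r - r * s / Real.sqrt (s ^ 2 + r ^ 2) := by
      rw [sub_nonneg, div_le_iff₀ hρ]
      nlinarith [hr0.le, Set.mem_Ioi.1 hr]
    exact mul_nonneg this (Real.exp_pos _).le
  have hlim : Filter.Tendsto (fun r : ℝ => -((Real.sqrt (s ^ 2 + r ^ 2) + 1 - s) *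
      Real.exp (-Real.sqrt (s ^ 2 + r ^ 2)))) Filter.atTop (nhds 0) := by
    have hg : Filter.Tendsto (fun x : ℝ => -((x + 1 - s) * Real.exp (-x)))
        Filter.atTop (nhds 0) := by
      have h1 := tendsto_pow_mul_exp_neg_atTop_nhds_zero 1
      have h2 : Filter.Tendsto (fun x : ℝ => Real.exp (-x)) Filter.atTop (nhds 0) :=
        Real.tendsto_exp_neg_atTop_nhds_zero
      have h3 := (h1.add (h2.const_mul (1 - s)))
      have : Filter.Tendsto (fun x : ℝ => x ^ 1 * Real.exp (-x) + (1 - s) * Real.exp (-x))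
          Filter.atTop (nhds (0 + (1 - s) * 0)) := h3
      simp only [add_zero, mul_zero] at this
      have h4 := this.neg
      simp only [neg_zero] at h4
      convert h4 using 2 with x
      ring
    exact hg.comp rho_tendsto
  have hfa := integral_Ioi_of_hasDerivAt_of_nonneg (hcontF.continuousWithinAt)
    (fun x hx => FA_deriv hx) hnonneg hlim
  have hint := integrableOn_Ioi_deriv_of_nonneg (hcontF.continuousWithinAt)
    (fun x hx => FA_deriv hx) hnonneg hlim
  refine ⟨?_, hint⟩
  rw [hfa]
  rw [show (0:ℝ) ^ 2 = 0 by ring, add_zero, Real.sqrt_sq hs]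
  ring

theorem FB_deriv {s : ℝ} {r : ℝ} (hr : 0 < r) :
    HasDerivAt (fun r => -Real.exp (-Real.sqrt (s ^ 2 + r ^ 2)))
      (r / Real.sqrt (s ^ 2 + r ^ 2) * Real.exp (-Real.sqrt (s ^ 2 + r ^ 2))) r := by
  have h1 := rho_deriv (s := s) hr
  have h3 := ((h1.neg).exp).neg
  refine h3.congr_deriv (Eq.symm ?_)
  simp only [Pi.neg_apply]
  ring

theorem integralB {s : ℝ} (hs : 0 ≤ s) :
    (∫ r in Ioi (0:ℝ),
        r / Real.sqrt (s ^ 2 + r ^ 2) * Real.exp (-Real.sqrt (s ^ 2 + r ^ 2)))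
      = Real.exp (-s) ∧
    IntegrableOn (fun r =>
        r / Real.sqrt (s ^ 2 + r ^ 2) * Real.exp (-Real.sqrt (s ^ 2 + r ^ 2)))
      (Ioi (0:ℝ)) := by
  have hcontF : Continuous (fun r : ℝ => -Real.exp (-Real.sqrt (s ^ 2 + r ^ 2))) := by fun_prop
  have hnonneg : ∀ r ∈ Ioi (0:ℝ), 0 ≤
      r / Real.sqrt (s ^ 2 + r ^ 2) * Real.exp (-Real.sqrt (s ^ 2 + r ^ 2)) := by
    intro r hr
    have hr0 : 0 < r := hr
    have hρ : 0 < Real.sqrt (s ^ 2 + r ^ 2) := Real.sqrt_pos.2 (by positivity)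
    have hr' : 0 < r := hr
    exact mul_nonneg (div_nonneg hr'.le hρ.le) (Real.exp_pos _).le
  have hlim : Filter.Tendsto (fun r : ℝ => -Real.exp (-Real.sqrt (s ^ 2 + r ^ 2)))
      Filter.atTop (nhds 0) := by
    have h2 : Filter.Tendsto (fun x : ℝ => -Real.exp (-x)) Filter.atTop (nhds 0) := by
      simpa using Real.tendsto_exp_neg_atTop_nhds_zero.neg
    exact h2.comp rho_tendsto
  have hfa := integral_Ioi_of_hasDerivAt_of_nonneg (hcontF.continuousWithinAt)
    (fun x hx => FB_deriv hx) hnonneg hlim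
  have hint := integrableOn_Ioi_deriv_of_nonneg (hcontF.continuousWithinAt)
    (fun x hx => FB_deriv hx) hnonneg hlim
  refine ⟨?_, hint⟩
  rw [hfa]
  rw [show (0:ℝ) ^ 2 = 0 by ring, add_zero, Real.sqrt_sq hs]
  ring

theorem K1_integrand_integrable {y : ℝ} (hy : 0 < y) :
    IntegrableOn (fun k => Real.exp (-y * Real.sqrt (k ^ 2 + 1))) (Ioi (0:ℝ)) := by
  apply Integrable.mono' (exp_neg_integrableOn_Ioi 0 hy)
  · exact (Continuous.aestronglyMeasurable (by fun_prop)).restrict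
  · filter_upwards with k
    rw [Real.norm_eq_abs, abs_of_pos (Real.exp_pos _)]
    apply Real.exp_le_exp.2
    rw [neg_mul, neg_mul, neg_le_neg_iff]
    apply mul_le_mul_of_nonneg_left _ hy.le
    calc k ≤ |k| := le_abs_self k
    _ = Real.sqrt (k ^ 2) := (Real.sqrt_sq_eq_abs k).symm
    _ ≤ Real.sqrt (k ^ 2 + 1) := Real.sqrt_le_sqrt (by linarith)

theorem ofReal_K1 {y : ℝ} (hy : 0 < y) :
    ENNReal.ofReal (K1 y)
      = ∫⁻ k in Ioi (0:ℝ), ENNReal.ofReal (Real.exp (-y * Real.sqrt (k ^ 2 + 1))) :=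
  ofReal_integral_eq_lintegral_ofReal (K1_integrand_integrable hy)
    (Filter.Eventually.of_forall fun k => (Real.exp_pos _).le)

theorem my_lintegral_image {s : Set ℝ} {f : ℝ → ℝ} {f' : ℝ → ℝ}
    (hs : MeasurableSet s) (hf' : ∀ x ∈ s, HasDerivWithinAt f (f' x) s x)
    (hf : Set.InjOn f s) (g : ℝ → ℝ≥0∞) :
    ∫⁻ x in f '' s, g x = ∫⁻ x in s, ENNReal.ofReal |f' x| * g (f x) := by
  simpa only [ContinuousLinearMap.det_toSpanSingleton] using
    lintegral_image_eq_lintegral_abs_det_fderiv_mul volume hs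
      (fun x hx => (hf' x hx).hasFDerivWithinAt) hf g

theorem K1_scaled {y : ℝ} (hy : 0 < y) :
    (∫⁻ v in Ioi (0:ℝ), ENNReal.ofReal (Real.exp (-Real.sqrt (y ^ 2 + v ^ 2)) / y))
      = ENNReal.ofReal (K1 y) := by
  have himg : (fun k => y * k) '' Ioi (0:ℝ) = Ioi (0:ℝ) := by
    ext v; constructor
    · rintro ⟨k, hk, rfl⟩; exact mul_pos hy hk
    · intro hv; exact ⟨v / y, div_pos hv hy, by field_simp⟩
  rw [← himg, my_lintegral_image measurableSet_Ioi
    (fun k _ => by simpa using ((hasDerivAt_id k).const_mul y).hasDerivWithinAt)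
    ((mul_right_injective₀ hy.ne').injOn) _]
  rw [ofReal_K1 hy]
  apply setLIntegral_congr_fun measurableSet_Ioi
  intro k hk
  dsimp only
  rw [← ENNReal.ofReal_mul (abs_nonneg _), abs_of_pos hy]
  congr 1
  have h1 : Real.sqrt (y ^ 2 + (y * k) ^ 2) = y * Real.sqrt (k ^ 2 + 1) := by
    rw [show y ^ 2 + (y * k) ^ 2 = y ^ 2 * (k ^ 2 + 1) by ring,
      Real.sqrt_mul (sq_nonneg y), Real.sqrt_sq hy.le]
  rw [h1]
  field_simp

theorem my_lintegral_polar (f : ℝ × ℝ → ℝ≥0∞) :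
    (∫⁻ p in polarCoord.target, ENNReal.ofReal p.1 * f (polarCoord.symm p)) = ∫⁻ p, f p := by
  set B : ℝ × ℝ → ℝ × ℝ →L[ℝ] ℝ × ℝ := fun p =>
    LinearMap.toContinuousLinearMap (Matrix.toLin (Module.Basis.finTwoProd ℝ) (Module.Basis.finTwoProd ℝ)
      !![cos p.2, -p.1 * sin p.2; sin p.2, p.1 * cos p.2])
  have B_det : ∀ p, (B p).det = p.1 := by
    intro p
    conv_rhs => rw [← one_mul p.1, ← cos_sq_add_sin_sq p.2]
    simp only [B, neg_mul, LinearMap.det_toContinuousLinearMap, LinearMap.det_toLin,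
      Matrix.det_fin_two_of, sub_neg_eq_add]
    ring
  symm
  calc
    ∫⁻ p, f p = ∫⁻ p in polarCoord.source, f p := by
      rw [← setLIntegral_univ]
      exact (setLIntegral_congr polarCoord_source_ae_eq_univ.symm)
    _ = ∫⁻ p in polarCoord.symm '' polarCoord.target, f p := by
      rw [polarCoord.symm_image_target_eq_source]
    _ = ∫⁻ p in polarCoord.target, ENNReal.ofReal |(B p).det| * f (polarCoord.symm p) := by
      apply lintegral_image_eq_lintegral_abs_det_fderiv_mul volume
        polarCoord.open_target.measurableSet
        (fun p _ => (hasFDerivAt_polarCoord_symm p).hasFDerivWithinAt)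
        polarCoord.symm.injOn
    _ = ∫⁻ p in polarCoord.target, ENNReal.ofReal p.1 * f (polarCoord.symm p) := by
      apply setLIntegral_congr_fun polarCoord.open_target.measurableSet
      intro p hp
      dsimp only
      rw [B_det, abs_of_pos hp.1]

theorem polar_step {s : ℝ} {h : ℝ → ℝ} (hm : Measurable h) :
    (∫⁻ w in Ioi (0:ℝ), ∫⁻ v in Ioi (0:ℝ),
        ENNReal.ofReal (Real.exp (-Real.sqrt (s ^ 2 + w ^ 2 + v ^ 2)) * h w))
      = ∫⁻ r in Ioi (0:ℝ), ∫⁻ θ in Ioo (0:ℝ) (π/2),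
          ENNReal.ofReal r
            * ENNReal.ofReal (Real.exp (-Real.sqrt (s ^ 2 + r ^ 2)) * h (r * Real.cos θ)) := by
  set F : ℝ × ℝ → ℝ≥0∞ := fun p =>
    ENNReal.ofReal (Real.exp (-Real.sqrt (s ^ 2 + p.1 ^ 2 + p.2 ^ 2)) * h p.1) with hF
  have hFm : Measurable F := by
    apply ENNReal.measurable_ofReal.comp
    apply Measurable.mul _ (hm.comp measurable_fst)
    fun_prop
  have hQ : MeasurableSet (Ioi (0:ℝ) ×ˢ Ioi (0:ℝ)) := measurableSet_Ioi.prod measurableSet_Ioi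
  have step1 : (∫⁻ w in Ioi (0:ℝ), ∫⁻ v in Ioi (0:ℝ),
      ENNReal.ofReal (Real.exp (-Real.sqrt (s ^ 2 + w ^ 2 + v ^ 2)) * h w))
      = ∫⁻ p in Ioi (0:ℝ) ×ˢ Ioi (0:ℝ), F p := by
    rw [Measure.volume_eq_prod, ← Measure.prod_restrict,
      lintegral_prod F hFm.aemeasurable]
  rw [step1, ← lintegral_indicator hQ, ← my_lintegral_polar _]
  have hS : MeasurableSet (Ioi (0:ℝ) ×ˢ Ioo (0:ℝ) (π/2)) :=
    measurableSet_Ioi.prod measurableSet_Ioo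
  have hTm : MeasurableSet polarCoord.target := polarCoord.open_target.measurableSet
  have step2 : (∫⁻ p in polarCoord.target,
      ENNReal.ofReal p.1 * (Ioi (0:ℝ) ×ˢ Ioi (0:ℝ)).indicator F (polarCoord.symm p))
      = ∫⁻ p in polarCoord.target,
        (Ioi (0:ℝ) ×ˢ Ioo (0:ℝ) (π/2)).indicator
          (fun p => ENNReal.ofReal p.1 * F (polarCoord.symm p)) p := by
    apply setLIntegral_congr_fun hTm
    intro p hp
    dsimp only
    have hp1 : 0 < p.1 := hp.1
    have hp2 : p.2 ∈ Ioo (-π) π := hp.2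
    have hmem : polarCoord.symm p ∈ Ioi (0:ℝ) ×ˢ Ioi (0:ℝ) ↔ p ∈ Ioi (0:ℝ) ×ˢ Ioo (0:ℝ) (π/2) := by
      have hsymm : polarCoord.symm p = (p.1 * Real.cos p.2, p.1 * Real.sin p.2) := rfl
      rw [hsymm]
      simp only [mem_prod, mem_Ioi, mem_Ioo]
      constructor
      · rintro ⟨hc, hsn⟩
        have hcpos : 0 < Real.cos p.2 := by
          rcases mul_pos_iff.1 hc with ⟨-, h⟩ | ⟨h, -⟩
          · exact h
          · linarith
        have hspos : 0 < Real.sin p.2 := by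
          rcases mul_pos_iff.1 hsn with ⟨-, h⟩ | ⟨h, -⟩
          · exact h
          · linarith
        have h2pos : 0 < p.2 := by
          by_contra hcon
          exact absurd (Real.sin_nonpos_of_nonpos_of_neg_pi_le (not_lt.1 hcon) hp2.1.le)
            (not_le.2 hspos)
        have h2lt : p.2 < π / 2 := by
          by_contra hcon
          have := Real.cos_nonpos_of_pi_div_two_le_of_le (not_lt.1 hcon)
            (by linarith [hp2.2, Real.pi_pos])
          exact absurd this (not_le.2 hcpos)
        exact ⟨hp1, h2pos, h2lt⟩
      · rintro ⟨-, h0, hlt⟩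
        have hcpos : 0 < Real.cos p.2 := Real.cos_pos_of_mem_Ioo ⟨by linarith, hlt⟩
        have hspos : 0 < Real.sin p.2 :=
          Real.sin_pos_of_pos_of_lt_pi h0 (by linarith [Real.pi_pos])
        exact ⟨mul_pos hp1 hcpos, mul_pos hp1 hspos⟩
    by_cases hit : p ∈ Ioi (0:ℝ) ×ˢ Ioo (0:ℝ) (π/2)
    · rw [indicator_of_mem (hmem.2 hit), indicator_of_mem hit]
    · rw [indicator_of_notMem (fun hc => hit (hmem.1 hc)), indicator_of_notMem hit, mul_zero]
  have htarget : polarCoord.target = Ioi (0:ℝ) ×ˢ Ioo (-π) π := rfl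
  rw [step2, lintegral_indicator hS, Measure.restrict_restrict hS, htarget,
    prod_inter_prod, inter_self,
    inter_eq_self_of_subset_left (Ioo_subset_Ioo (by linarith [Real.pi_pos]) (by
      linarith [Real.pi_pos]))]
  have step3 : (∫⁻ p in Ioi (0:ℝ) ×ˢ Ioo (0:ℝ) (π/2),
      ENNReal.ofReal p.1 * F (polarCoord.symm p))
      = ∫⁻ p in Ioi (0:ℝ) ×ˢ Ioo (0:ℝ) (π/2),
        ENNReal.ofReal p.1
          * ENNReal.ofReal (Real.exp (-Real.sqrt (s ^ 2 + p.1 ^ 2)) * h (p.1 * Real.cos p.2)) := by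
    apply setLIntegral_congr_fun hS
    intro p _
    dsimp only
    have hsymm : polarCoord.symm p = (p.1 * Real.cos p.2, p.1 * Real.sin p.2) := rfl
    rw [hsymm]
    simp only [hF]
    have : s ^ 2 + (p.1 * Real.cos p.2) ^ 2 + (p.1 * Real.sin p.2) ^ 2 = s ^ 2 + p.1 ^ 2 := by
      linear_combination p.1 ^ 2 * Real.sin_sq_add_cos_sq p.2
    rw [this]
  rw [step3]
  rw [Measure.volume_eq_prod, ← Measure.prod_restrict, lintegral_prod _ (by
    apply Measurable.aemeasurable
    apply Measurable.fun_mul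
    · exact ENNReal.measurable_ofReal.comp measurable_fst
    · apply ENNReal.measurable_ofReal.comp
      apply Measurable.mul (by fun_prop)
      exact hm.comp (measurable_fst.mul (Real.measurable_cos.comp measurable_snd)))]

theorem quot_nonneg (s x : ℝ) : 0 ≤ x ^ 2 / (s ^ 2 + x ^ 2) := by positivity

theorem quot_le_one (s x : ℝ) : x ^ 2 / (s ^ 2 + x ^ 2) ≤ 1 := by
  rcases eq_or_lt_of_le (by positivity : (0:ℝ) ≤ s ^ 2 + x ^ 2) with h | h
  · rw [← h]; simp
  · rw [div_le_one h]; nlinarith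

theorem thetaA_int {r s : ℝ} (hr : 0 < r) :
    IntegrableOn (fun θ => (r * Real.cos θ) ^ 2 / (s ^ 2 + (r * Real.cos θ) ^ 2))
      (Ioo (0:ℝ) (π/2)) := by
  apply Integrable.mono' (integrable_const 1)
  · apply Measurable.aestronglyMeasurable
    apply Measurable.div <;> fun_prop
  · filter_upwards with θ
    rw [Real.norm_eq_abs, abs_of_nonneg (quot_nonneg _ _)]
    exact quot_le_one _ _

theorem thetaA_val {r s : ℝ} (hr : 0 < r) (hs : 0 ≤ s) :
    (∫ θ in Ioo (0:ℝ) (π/2), (r * Real.cos θ) ^ 2 / (s ^ 2 + (r * Real.cos θ) ^ 2))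
      = π/2 - π * s / (2 * Real.sqrt (s ^ 2 + r ^ 2)) := by
  have hvol : (volume (Ioo (0:ℝ) (π/2))).toReal = π/2 := by
    rw [Real.volume_Ioo, ENNReal.toReal_ofReal (by linarith [Real.pi_pos])]
    ring
  rcases eq_or_lt_of_le hs with rfl | hs'
  · rw [setIntegral_congr_fun measurableSet_Ioo (g := fun _ => (1:ℝ)) ?_]
    · rw [setIntegral_const, smul_eq_mul, measureReal_def, hvol]
      simp
    · intro θ hθ
      have hc : 0 < Real.cos θ := Real.cos_pos_of_mem_Ioo ⟨by linarith [hθ.1, Real.pi_pos], hθ.2⟩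
      have : (0:ℝ) < (r * Real.cos θ) ^ 2 := by positivity
      field_simp
      ring
  · have hpt : ∀ θ ∈ Ioo (0:ℝ) (π/2), (r * Real.cos θ) ^ 2 / (s ^ 2 + (r * Real.cos θ) ^ 2)
        = 1 - s ^ 2 * (r ^ 2 * Real.cos θ ^ 2 + s ^ 2)⁻¹ := by
      intro θ _
      have hd : (0:ℝ) < r ^ 2 * Real.cos θ ^ 2 + s ^ 2 := by positivity
      field_simp
      ring
    rw [setIntegral_congr_fun measurableSet_Ioo hpt]
    have hcont : Continuous (fun θ : ℝ => s ^ 2 * (r ^ 2 * Real.cos θ ^ 2 + s ^ 2)⁻¹) := by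
      apply Continuous.mul continuous_const
      apply Continuous.inv₀ (by fun_prop)
      intro θ; positivity
    have hint2 : IntegrableOn (fun θ : ℝ => s ^ 2 * (r ^ 2 * Real.cos θ ^ 2 + s ^ 2)⁻¹)
        (Ioo (0:ℝ) (π/2)) :=
      (hcont.integrableOn_Icc).mono_set Ioo_subset_Icc_self
    rw [integral_sub (integrable_const 1) hint2, setIntegral_const, smul_eq_mul, measureReal_def, hvol,
      MeasureTheory.integral_const_mul, theta_core hr hs']
    have hc : Real.sqrt (r ^ 2 + s ^ 2) = Real.sqrt (s ^ 2 + r ^ 2) := by rw [add_comm]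
    rw [hc]
    have hρ : 0 < Real.sqrt (s ^ 2 + r ^ 2) :=
      Real.sqrt_pos.2 (by positivity)
    field_simp

theorem thetaB_int {r s : ℝ} (hs : 0 < s) :
    IntegrableOn (fun θ => (s ^ 2 + (r * Real.cos θ) ^ 2)⁻¹) (Ioo (0:ℝ) (π/2)) := by
  have hcont : Continuous (fun θ : ℝ => (s ^ 2 + (r * Real.cos θ) ^ 2)⁻¹) := by
    apply Continuous.inv₀ (by fun_prop)
    intro θ; positivity
  exact (hcont.integrableOn_Icc).mono_set Ioo_subset_Icc_self

theorem thetaB_val {r s : ℝ} (hr : 0 < r) (hs : 0 < s) :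
    (∫ θ in Ioo (0:ℝ) (π/2), (s ^ 2 + (r * Real.cos θ) ^ 2)⁻¹)
      = π / (2 * s * Real.sqrt (s ^ 2 + r ^ 2)) := by
  have hpt : ∀ θ ∈ Ioo (0:ℝ) (π/2), (s ^ 2 + (r * Real.cos θ) ^ 2)⁻¹
      = (r ^ 2 * Real.cos θ ^ 2 + s ^ 2)⁻¹ := by
    intro θ _; ring_nf
  rw [setIntegral_congr_fun measurableSet_Ioo hpt, theta_core hr hs, add_comm (r^2)]

theorem phi_img {s : ℝ} (hs : 0 ≤ s) :
    (fun w => Real.sqrt (s ^ 2 + w ^ 2)) '' Ioi (0:ℝ) = Ioi s := by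
  ext y; constructor
  · rintro ⟨w, hw, rfl⟩
    have : s = Real.sqrt (s ^ 2) := (Real.sqrt_sq hs).symm
    rw [mem_Ioi, this]
    exact Real.sqrt_lt_sqrt (by positivity) (by nlinarith [Set.mem_Ioi.1 hw])
  · intro hy
    have hy' : s < y := hy
    have hy0 : 0 < y := lt_of_le_of_lt hs hy'
    refine ⟨Real.sqrt (y ^ 2 - s ^ 2), ?_, ?_⟩
    · exact Real.sqrt_pos.2 (by nlinarith)
    · show Real.sqrt (s ^ 2 + Real.sqrt (y ^ 2 - s ^ 2) ^ 2) = y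
      rw [Real.sq_sqrt (by nlinarith : (0:ℝ) ≤ y ^ 2 - s ^ 2)]
      rw [show s ^ 2 + (y ^ 2 - s ^ 2) = y ^ 2 by ring, Real.sqrt_sq hy0.le]

theorem phi_inj {s : ℝ} : Set.InjOn (fun w => Real.sqrt (s ^ 2 + w ^ 2)) (Ioi (0:ℝ)) := by
  intro a ha b hb hab
  simp only at hab
  have ha' : 0 < a := ha
  have hb' : 0 < b := hb
  have := congrArg (fun x : ℝ => x ^ 2) hab
  simp only [Real.sq_sqrt (by positivity : (0:ℝ) ≤ s ^ 2 + a ^ 2),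
    Real.sq_sqrt (by positivity : (0:ℝ) ≤ s ^ 2 + b ^ 2)] at this
  nlinarith

theorem K1_sm : StronglyMeasurable K1 := by
  apply StronglyMeasurable.integral_prod_right'
    (f := fun p : ℝ × ℝ => Real.exp (-p.1 * Real.sqrt (p.2 ^ 2 + 1)))
  apply Continuous.stronglyMeasurable
  fun_prop

theorem chain {s : ℝ} (hs : 0 ≤ s) {g h : ℝ → ℝ} (hm : Measurable h)
    (hg0 : ∀ y ∈ Ioi s, 0 ≤ g y)
    (hkey : ∀ w ∈ Ioi (0:ℝ), ∀ v : ℝ,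
      w / Real.sqrt (s ^ 2 + w ^ 2) * (g (Real.sqrt (s ^ 2 + w ^ 2)) *
          (Real.exp (-Real.sqrt (s ^ 2 + w ^ 2 + v ^ 2)) / Real.sqrt (s ^ 2 + w ^ 2)))
        = Real.exp (-Real.sqrt (s ^ 2 + w ^ 2 + v ^ 2)) * h w) :
    (∫⁻ y in Ioi s, ENNReal.ofReal (K1 y * g y))
      = ∫⁻ r in Ioi (0:ℝ), ∫⁻ θ in Ioo (0:ℝ) (π/2),
          ENNReal.ofReal r
            * ENNReal.ofReal (Real.exp (-Real.sqrt (s ^ 2 + r ^ 2)) * h (r * Real.cos θ)) := by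
  rw [← phi_img hs, my_lintegral_image measurableSet_Ioi
    (fun w hw => (rho_deriv (s := s) hw).hasDerivWithinAt) phi_inj]
  rw [← polar_step hm]
  apply setLIntegral_congr_fun measurableSet_Ioi
  intro w hw
  dsimp only
  have hw' : 0 < w := hw
  have hφpos : 0 < Real.sqrt (s ^ 2 + w ^ 2) := Real.sqrt_pos.2 (by positivity)
  have hφ2 : Real.sqrt (s ^ 2 + w ^ 2) ^ 2 = s ^ 2 + w ^ 2 := Real.sq_sqrt (by positivity)
  have hymem : Real.sqrt (s ^ 2 + w ^ 2) ∈ Ioi s := by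
    rw [← phi_img hs]; exact ⟨w, hw, rfl⟩
  -- split ofReal
  rw [ENNReal.ofReal_mul (K1_nonneg _), mul_comm (ENNReal.ofReal (K1 _)),
    ← mul_assoc, ← ENNReal.ofReal_mul (abs_nonneg _), ← K1_scaled hφpos,
    ← lintegral_const_mul' _ _ ENNReal.ofReal_ne_top]
  apply setLIntegral_congr_fun measurableSet_Ioi
  intro v _
  dsimp only
  rw [← ENNReal.ofReal_mul (mul_nonneg (abs_nonneg _) (hg0 _ hymem))]
  congr 1
  have hexp : Real.sqrt (Real.sqrt (s ^ 2 + w ^ 2) ^ 2 + v ^ 2)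
      = Real.sqrt (s ^ 2 + w ^ 2 + v ^ 2) := by rw [hφ2]
  rw [abs_of_pos (div_pos hw' hφpos)]
  calc w / Real.sqrt (s ^ 2 + w ^ 2) * g (Real.sqrt (s ^ 2 + w ^ 2))
        * (Real.exp (-Real.sqrt (Real.sqrt (s ^ 2 + w ^ 2) ^ 2 + v ^ 2))
            / Real.sqrt (s ^ 2 + w ^ 2))
      = w / Real.sqrt (s ^ 2 + w ^ 2) * (g (Real.sqrt (s ^ 2 + w ^ 2)) *
          (Real.exp (-Real.sqrt (s ^ 2 + w ^ 2 + v ^ 2)) / Real.sqrt (s ^ 2 + w ^ 2))) := by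
        rw [hexp]; ring
  _ = Real.exp (-Real.sqrt (s ^ 2 + w ^ 2 + v ^ 2)) * h w := hkey w hw v

theorem coreA_nonneg {s : ℝ} (hs : 0 ≤ s) : ∀ r ∈ Ioi (0:ℝ),
    0 ≤ (r - r * s / Real.sqrt (s ^ 2 + r ^ 2)) * Real.exp (-Real.sqrt (s ^ 2 + r ^ 2)) := by
  intro r hr
  have hr0 : 0 < r := hr
  have hρ : 0 < Real.sqrt (s ^ 2 + r ^ 2) := Real.sqrt_pos.2 (by positivity)
  have h5 : s ≤ Real.sqrt (s ^ 2 + r ^ 2) := rho_ge hs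
  have : 0 ≤ r - r * s / Real.sqrt (s ^ 2 + r ^ 2) := by
    rw [sub_nonneg, div_le_iff₀ hρ]
    nlinarith
  exact mul_nonneg this (Real.exp_pos _).le

theorem mainA {s : ℝ} (hs : 0 ≤ s) :
    (∫ y in Ioi s, K1 y * Real.sqrt (y ^ 2 - s ^ 2)) = π / 2 * Real.exp (-s) := by
  have hm : Measurable (fun w : ℝ => w ^ 2 / (s ^ 2 + w ^ 2)) :=
    (measurable_id.pow_const 2).div ((measurable_const.add (measurable_id.pow_const 2)))
  have hg0 : ∀ y ∈ Ioi s, 0 ≤ Real.sqrt (y ^ 2 - s ^ 2) := fun y _ => Real.sqrt_nonneg _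
  have hkey : ∀ w ∈ Ioi (0:ℝ), ∀ v : ℝ,
      w / Real.sqrt (s ^ 2 + w ^ 2) * (Real.sqrt (Real.sqrt (s ^ 2 + w ^ 2) ^ 2 - s ^ 2) *
          (Real.exp (-Real.sqrt (s ^ 2 + w ^ 2 + v ^ 2)) / Real.sqrt (s ^ 2 + w ^ 2)))
        = Real.exp (-Real.sqrt (s ^ 2 + w ^ 2 + v ^ 2)) * (w ^ 2 / (s ^ 2 + w ^ 2)) := by
    intro w hw v
    have hw0 : 0 < w := hw
    have hφpos : 0 < Real.sqrt (s ^ 2 + w ^ 2) := Real.sqrt_pos.2 (by positivity)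
    have hφ2 : Real.sqrt (s ^ 2 + w ^ 2) ^ 2 = s ^ 2 + w ^ 2 := Real.sq_sqrt (by positivity)
    rw [hφ2, show s ^ 2 + w ^ 2 - s ^ 2 = w ^ 2 by ring, Real.sqrt_sq hw0.le]
    set E := Real.exp (-Real.sqrt (s ^ 2 + w ^ 2 + v ^ 2)) with hE
    generalize hgen : Real.sqrt (s ^ 2 + w ^ 2) = u at hφ2 hφpos ⊢
    rw [← hφ2]
    field_simp
  have h0 : (∫ y in Ioi s, K1 y * Real.sqrt (y ^ 2 - s ^ 2))
      = (∫⁻ y in Ioi s, ENNReal.ofReal (K1 y * Real.sqrt (y ^ 2 - s ^ 2))).toReal := by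
    apply integral_eq_lintegral_of_nonneg_ae
    · filter_upwards with y
      exact mul_nonneg (K1_nonneg _) (Real.sqrt_nonneg _)
    · exact (K1_sm.mul (Continuous.stronglyMeasurable (by fun_prop))).aestronglyMeasurable
  rw [h0, chain hs hm hg0 hkey]
  have hstep : (∫⁻ r in Ioi (0:ℝ), ∫⁻ θ in Ioo (0:ℝ) (π/2),
      ENNReal.ofReal r * ENNReal.ofReal (Real.exp (-Real.sqrt (s ^ 2 + r ^ 2))
        * ((r * Real.cos θ) ^ 2 / (s ^ 2 + (r * Real.cos θ) ^ 2))))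
      = ∫⁻ r in Ioi (0:ℝ), ENNReal.ofReal (π / 2 *
          ((r - r * s / Real.sqrt (s ^ 2 + r ^ 2)) * Real.exp (-Real.sqrt (s ^ 2 + r ^ 2)))) := by
    apply setLIntegral_congr_fun measurableSet_Ioi
    intro r hr
    dsimp only
    have hr0 : 0 < r := hr
    have hρ : 0 < Real.sqrt (s ^ 2 + r ^ 2) := Real.sqrt_pos.2 (by positivity)
    have hval : (0:ℝ) ≤ π/2 - π * s / (2 * Real.sqrt (s ^ 2 + r ^ 2)) := by
      have h5 : s ≤ Real.sqrt (s ^ 2 + r ^ 2) := rho_ge hs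
      rw [sub_nonneg, div_le_iff₀ (by positivity)]
      nlinarith [Real.pi_pos]
    calc (∫⁻ θ in Ioo (0:ℝ) (π/2),
        ENNReal.ofReal r * ENNReal.ofReal (Real.exp (-Real.sqrt (s ^ 2 + r ^ 2))
          * ((r * Real.cos θ) ^ 2 / (s ^ 2 + (r * Real.cos θ) ^ 2))))
        = (ENNReal.ofReal r * ENNReal.ofReal (Real.exp (-Real.sqrt (s ^ 2 + r ^ 2))))
            * ∫⁻ θ in Ioo (0:ℝ) (π/2),
              ENNReal.ofReal ((r * Real.cos θ) ^ 2 / (s ^ 2 + (r * Real.cos θ) ^ 2)) := by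
          rw [← lintegral_const_mul' _ _
            (ENNReal.mul_ne_top ENNReal.ofReal_ne_top ENNReal.ofReal_ne_top)]
          apply setLIntegral_congr_fun measurableSet_Ioo
          intro θ _
          dsimp only
          rw [ENNReal.ofReal_mul (Real.exp_pos _).le, mul_assoc]
      _ = (ENNReal.ofReal r * ENNReal.ofReal (Real.exp (-Real.sqrt (s ^ 2 + r ^ 2))))
            * ENNReal.ofReal (π/2 - π * s / (2 * Real.sqrt (s ^ 2 + r ^ 2))) := by
          rw [← ofReal_integral_eq_lintegral_ofReal (thetaA_int hr0)
            (Filter.Eventually.of_forall fun θ => quot_nonneg _ _), thetaA_val hr0 hs]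
      _ = ENNReal.ofReal (π / 2 *
          ((r - r * s / Real.sqrt (s ^ 2 + r ^ 2)) * Real.exp (-Real.sqrt (s ^ 2 + r ^ 2)))) := by
          rw [← ENNReal.ofReal_mul hr0.le, ← ENNReal.ofReal_mul
            (mul_nonneg hr0.le (Real.exp_pos _).le)]
          congr 1
          field_simp
  rw [hstep, ← ofReal_integral_eq_lintegral_ofReal ((integralA hs).2.const_mul (π/2))
    ((ae_restrict_iff' measurableSet_Ioi).2 (Filter.Eventually.of_forall fun r hr =>
      mul_nonneg (by positivity) (coreA_nonneg hs r hr)))]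
  rw [MeasureTheory.integral_const_mul, (integralA hs).1, ENNReal.toReal_ofReal (by positivity)]

theorem mainB {s : ℝ} (hs : 0 < s) :
    (∫ y in Ioi s, K1 y / Real.sqrt (y ^ 2 - s ^ 2)) = π / (2 * s) * Real.exp (-s) := by
  have hm : Measurable (fun w : ℝ => (s ^ 2 + w ^ 2)⁻¹) :=
    ((measurable_const.add (measurable_id.pow_const 2))).inv
  have hg0 : ∀ y ∈ Ioi s, 0 ≤ (Real.sqrt (y ^ 2 - s ^ 2))⁻¹ := fun y _ =>
    inv_nonneg.2 (Real.sqrt_nonneg _)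
  have hkey : ∀ w ∈ Ioi (0:ℝ), ∀ v : ℝ,
      w / Real.sqrt (s ^ 2 + w ^ 2) * ((Real.sqrt (Real.sqrt (s ^ 2 + w ^ 2) ^ 2 - s ^ 2))⁻¹ *
          (Real.exp (-Real.sqrt (s ^ 2 + w ^ 2 + v ^ 2)) / Real.sqrt (s ^ 2 + w ^ 2)))
        = Real.exp (-Real.sqrt (s ^ 2 + w ^ 2 + v ^ 2)) * (s ^ 2 + w ^ 2)⁻¹ := by
    intro w hw v
    have hw0 : 0 < w := hw
    have hφpos : 0 < Real.sqrt (s ^ 2 + w ^ 2) := Real.sqrt_pos.2 (by positivity)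
    have hφ2 : Real.sqrt (s ^ 2 + w ^ 2) ^ 2 = s ^ 2 + w ^ 2 := Real.sq_sqrt (by positivity)
    rw [hφ2, show s ^ 2 + w ^ 2 - s ^ 2 = w ^ 2 by ring, Real.sqrt_sq hw0.le]
    set E := Real.exp (-Real.sqrt (s ^ 2 + w ^ 2 + v ^ 2)) with hE
    generalize hgen : Real.sqrt (s ^ 2 + w ^ 2) = u at hφ2 hφpos ⊢
    rw [← hφ2]
    field_simp
  have h0 : (∫ y in Ioi s, K1 y / Real.sqrt (y ^ 2 - s ^ 2))
      = (∫⁻ y in Ioi s, ENNReal.ofReal (K1 y * (Real.sqrt (y ^ 2 - s ^ 2))⁻¹)).toReal := by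
    rw [show (fun y => K1 y / Real.sqrt (y ^ 2 - s ^ 2))
      = fun y => K1 y * (Real.sqrt (y ^ 2 - s ^ 2))⁻¹ from funext fun y => div_eq_mul_inv _ _]
    apply integral_eq_lintegral_of_nonneg_ae
    · filter_upwards with y
      exact mul_nonneg (K1_nonneg _) (inv_nonneg.2 (Real.sqrt_nonneg _))
    · exact (K1_sm.measurable.mul ((Real.continuous_sqrt.comp (by fun_prop) :
        Continuous fun y : ℝ => Real.sqrt (y ^ 2 - s ^ 2)).measurable).inv).aestronglyMeasurable
  rw [h0, chain hs.le hm hg0 hkey]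
  have hstep : (∫⁻ r in Ioi (0:ℝ), ∫⁻ θ in Ioo (0:ℝ) (π/2),
      ENNReal.ofReal r * ENNReal.ofReal (Real.exp (-Real.sqrt (s ^ 2 + r ^ 2))
        * (s ^ 2 + (r * Real.cos θ) ^ 2)⁻¹))
      = ∫⁻ r in Ioi (0:ℝ), ENNReal.ofReal (π / (2 * s) *
          (r / Real.sqrt (s ^ 2 + r ^ 2) * Real.exp (-Real.sqrt (s ^ 2 + r ^ 2)))) := by
    apply setLIntegral_congr_fun measurableSet_Ioi
    intro r hr
    dsimp only
    have hr0 : 0 < r := hr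
    have hρ : 0 < Real.sqrt (s ^ 2 + r ^ 2) := Real.sqrt_pos.2 (by positivity)
    calc (∫⁻ θ in Ioo (0:ℝ) (π/2),
        ENNReal.ofReal r * ENNReal.ofReal (Real.exp (-Real.sqrt (s ^ 2 + r ^ 2))
          * (s ^ 2 + (r * Real.cos θ) ^ 2)⁻¹))
        = (ENNReal.ofReal r * ENNReal.ofReal (Real.exp (-Real.sqrt (s ^ 2 + r ^ 2))))
            * ∫⁻ θ in Ioo (0:ℝ) (π/2), ENNReal.ofReal ((s ^ 2 + (r * Real.cos θ) ^ 2)⁻¹) := by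
          rw [← lintegral_const_mul' _ _
            (ENNReal.mul_ne_top ENNReal.ofReal_ne_top ENNReal.ofReal_ne_top)]
          apply setLIntegral_congr_fun measurableSet_Ioo
          intro θ _
          dsimp only
          rw [ENNReal.ofReal_mul (Real.exp_pos _).le, mul_assoc]
      _ = (ENNReal.ofReal r * ENNReal.ofReal (Real.exp (-Real.sqrt (s ^ 2 + r ^ 2))))
            * ENNReal.ofReal (π / (2 * s * Real.sqrt (s ^ 2 + r ^ 2))) := by
          rw [← ofReal_integral_eq_lintegral_ofReal (thetaB_int hs)
            (Filter.Eventually.of_forall fun θ => by positivity), thetaB_val hr0 hs]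
      _ = ENNReal.ofReal (π / (2 * s) *
          (r / Real.sqrt (s ^ 2 + r ^ 2) * Real.exp (-Real.sqrt (s ^ 2 + r ^ 2)))) := by
          rw [← ENNReal.ofReal_mul hr0.le, ← ENNReal.ofReal_mul
            (mul_nonneg hr0.le (Real.exp_pos _).le)]
          congr 1
          field_simp
  rw [hstep, ← ofReal_integral_eq_lintegral_ofReal ((integralB hs.le).2.const_mul (π/(2*s)))
    ((ae_restrict_iff' measurableSet_Ioi).2 (Filter.Eventually.of_forall fun r hr => by
      have hr0 : 0 < r := hr
      have hρ : 0 < Real.sqrt (s ^ 2 + r ^ 2) := Real.sqrt_pos.2 (by positivity)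
      positivity))]
  rw [MeasureTheory.integral_const_mul, (integralB hs.le).1,
    ENNReal.toReal_ofReal (by positivity)]

theorem besselK1_integral_closed_form :
    (∀ s : ℝ, 0 ≤ s →
      (∫ y in Set.Ioi s, K1 y * Real.sqrt (y ^ 2 - s ^ 2)) = (π / 2) * Real.exp (-s)) ∧
    (∀ s : ℝ, 0 < s →
      (∫ y in Set.Ioi s, K1 y * Real.sqrt (y ^ 2 - s ^ 2))
        = s * ∫ y in Set.Ioi s, K1 y / Real.sqrt (y ^ 2 - s ^ 2)) := by
  constructor
  · intro s hs
    rw [mainA hs]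
  · intro s hs
    rw [mainA hs.le, mainB hs]
    field_simp
end
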